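/- arXiv:2006.09321 — 9 statements merged into one kernel-verified Lean document; each statement's English description precedes it below -/
import Mathlib

section
/- For every n ≥ 1, the number of interval parking functions is |IPF_n| = n!·(n+1)^{n−1}; moreover, for each parking function a ∈ PF_n, the number of b ∈ [n]^n with (a,b) ∈ IPF_n is exactly n!. -/
/-- `o` is the outcome of running parking Algorithm A on preference vector `a`:
car `i` parks in the first unoccupied spot in `[a i, n]`, and every car parks. -/
def IsAOutcome {n : ℕ} (a o : Fin n → Fin n) : Prop :=
  Function.Injective o ∧ ∀ i, a i ≤ o i ∧
    ∀ s, a i ≤ s → s < o i → ∃ j, j < i ∧ o j = s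

/-- `a` is a parking function. -/
def IsParkingFunction {n : ℕ} (a : Fin n → Fin n) : Prop :=
  ∃ o, IsAOutcome a o

/-- `o` is the outcome of running parking Algorithm B on the pair `(a, b)`:
car `i` parks in the first unoccupied spot in `[a i, b i]`, and every car parks. -/
def IsBOutcome {n : ℕ} (a b o : Fin n → Fin n) : Prop :=
  Function.Injective o ∧ ∀ i, a i ≤ o i ∧ o i ≤ b i ∧
    ∀ s, a i ≤ s → s < o i → ∃ j, j < i ∧ o j = s

/-- `(a, b)` is an interval parking function. -/
def IsIPF {n : ℕ} (a b : Fin n → Fin n) : Prop :=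
  ∃ o, IsBOutcome a b o

/-- The conjugate (reverse complement) `x*` of `x`, with `x*(i) = n + 1 - x(n + 1 - i)`. -/
def pconj {n : ℕ} (f : Fin n → Fin n) : Fin n → Fin n :=
  fun i => (f i.rev).rev

/-- The pair `(x, y)` is reachable, `x ⊵_R y`: there is an IPF `(a, b)` with
`O(a) = x` and `O(b*) = y*`. -/
def Reaches {n : ℕ} (x y : Fin n → Fin n) : Prop :=
  ∃ a b : Fin n → Fin n, IsIPF a b ∧ IsAOutcome a x ∧ IsAOutcome (pconj b) (pconj y)

/-- Pseudoreachability `x ≥_P y`: the reflexive-transitive closure of reachability. -/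
def PseudoGE {n : ℕ} (x y : Equiv.Perm (Fin n)) : Prop :=
  Relation.ReflTransGen (fun u v : Equiv.Perm (Fin n) => Reaches ⇑u ⇑v) x y

/-- `#{k ∈ [i] : x(k) ≥ j}` (with `i`, `j` zero-indexed). -/
def bcount {n : ℕ} (x : Fin n → Fin n) (i j : Fin n) : ℕ :=
  (Finset.univ.filter (fun k : Fin n => k ≤ i ∧ j ≤ x k)).card

/-- The Bruhat order `x ≥_B y` on the symmetric group. -/
def BruhatGE {n : ℕ} (x y : Equiv.Perm (Fin n)) : Prop :=
  ∀ i j : Fin n, bcount ⇑y i j ≤ bcount ⇑x i j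

/-- The number of inversions (the Coxeter length) of `f`. -/
def invCount {n : ℕ} (f : Fin n → Fin n) : ℕ :=
  (Finset.univ.filter (fun p : Fin n × Fin n => p.1 < p.2 ∧ f p.2 < f p.1)).card

/-- The adjacent transposition `s_i` exchanging `i` and `i+1` (one-indexed),
as a permutation of `Fin n`. -/
def sgen (n : ℕ) (i : ℕ) : Equiv.Perm (Fin n) :=
  if h : 1 ≤ i ∧ i < n then Equiv.swap ⟨i - 1, by omega⟩ ⟨i, h.2⟩ else 1

/-- Left weak order: `x ≥_W y` iff `x = s_{i₁} ⋯ s_{i_k} · y` with `ℓ(x) = ℓ(y) + k`. -/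
def WeakGE {n : ℕ} (x y : Equiv.Perm (Fin n)) : Prop :=
  ∃ l : List ℕ, (∀ i ∈ l, 1 ≤ i ∧ i ≤ n - 1) ∧
    x = (l.map (sgen n)).prod * y ∧ invCount ⇑x = invCount ⇑y + l.length

/-- The projection `x ↦ x̂` deleting the last position and the value `x(n)`. -/
def hatf {n : ℕ} (x : Fin (n + 1) → Fin (n + 1)) : Fin n → Fin n :=
  fun i =>
    if h : (x i.castSucc).val < (x (Fin.last n)).val
    then ⟨(x i.castSucc).val, by have h1 := (x (Fin.last n)).isLt; omega⟩
    else ⟨(x i.castSucc).val - 1, by have h1 := (x i.castSucc).isLt; have h2 := i.isLt; omega⟩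

/-- `lam n f k` is `λ_k` of the permutation of `[n]` with one-line notation `f(1), …, f(n)`
(one-indexed): `λ_{n-1}(x) = n - x(n)` and `λ_k(x) = λ_k(x̄)` for `k ≤ n - 2`, where
`x̄ ∈ S_{n-1}` is the restriction of `u⁻¹·x` (`u = s_{x(n)} ⋯ s_{n-1}`), concretely
`x̄(i) = x(i)` if `x(i) < x(n)` and `x̄(i) = x(i) - 1` if `x(i) > x(n)`. -/
def lam : ℕ → (ℕ → ℕ) → ℕ → ℕ
  | 0, _, _ => 0
  | n + 1, f, k =>
    if k = n then (n + 1) - f (n + 1)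
    else lam n (fun i => if f i < f (n + 1) then f i else f i - 1) k

/-- The one-line notation of `x`, as a one-indexed function `ℕ → ℕ`. -/
def oneline {n : ℕ} (x : Fin n → Fin n) : ℕ → ℕ :=
  fun i => if h : i - 1 < n then (x ⟨i - 1, h⟩).val + 1 else 0

/-- `y` contains the pattern `σ`. -/
def ContainsPattern {n m : ℕ} (y : Equiv.Perm (Fin n)) (σ : Equiv.Perm (Fin m)) : Prop :=
  ∃ f : Fin m → Fin n, StrictMono f ∧ ∀ j k, y (f j) < y (f k) ↔ σ j < σ k

/-- `x` is an AR (Arndt–Riehl) permutation: `x⁻¹(i) ≤ i + 1` for all `i ∈ [n]`. -/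
def IsAR {n : ℕ} (x : Equiv.Perm (Fin n)) : Prop :=
  ∀ i : Fin n, (x.symm i).val ≤ i.val + 1

namespace IPFaux


theorem aout_unique {n : ℕ} {a o o' : Fin n → Fin n}
    (h : IsAOutcome a o) (h' : IsAOutcome a o') : o = o' := by
  have key : ∀ k : ℕ, ∀ i : Fin n, i.val = k → o i = o' i := by
    intro k
    induction k using Nat.strong_induction_on with
    | _ k ih =>
      intro i hik
      by_contra hne
      rcases lt_or_gt_of_ne hne with hlt | hlt
      · obtain ⟨j, hj, hj2⟩ := ((h'.2 i).2) (o i) (h.2 i).1 hlt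
        have hj' : j.val < k := by rw [← hik]; exact hj
        have : o j = o' j := ih j.val hj' j rfl
        have : o j = o i := this.trans hj2
        exact absurd (h.1 this) (Fin.ne_of_lt hj)
      · obtain ⟨j, hj, hj2⟩ := ((h.2 i).2) (o' i) (h'.2 i).1 hlt
        have hj' : j.val < k := by rw [← hik]; exact hj
        have : o j = o' j := ih j.val hj' j rfl
        have : o' j = o' i := this.symm.trans hj2
        exact absurd (h'.1 this) (Fin.ne_of_lt hj)
  funext i; exact key i.val i rfl

theorem isAOutcome_of_isBOutcome {n : ℕ} {a b o : Fin n → Fin n}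
    (h : IsBOutcome a b o) : IsAOutcome a o :=
  ⟨h.1, fun i => ⟨(h.2 i).1, (h.2 i).2.2⟩⟩

theorem IsIPF.pf {n : ℕ} {a b : Fin n → Fin n} (h : IsIPF a b) : IsParkingFunction a := by
  obtain ⟨o, ho⟩ := h; exact ⟨o, isAOutcome_of_isBOutcome ho⟩

theorem isIPF_iff {n : ℕ} {a o : Fin n → Fin n} (ho : IsAOutcome a o) (b : Fin n → Fin n) :
    IsIPF a b ↔ ∀ i, o i ≤ b i := by
  constructor
  · rintro ⟨o', h'⟩
    have heq : o = o' := aout_unique ho (isAOutcome_of_isBOutcome h')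
    subst heq
    exact fun i => (h'.2 i).2.1
  · intro hb; exact ⟨o, ho.1, fun i => ⟨(ho.2 i).1, hb i, (ho.2 i).2⟩⟩

def geEquiv {n : ℕ} (j : Fin n) : {x : Fin n // j ≤ x} ≃ Fin (n - j.val) where
  toFun x := ⟨x.1.val - j.val, by
    have h1 := x.1.isLt; have h2 : j.val ≤ x.1.val := x.2; omega⟩
  invFun m := ⟨⟨j.val + m.val, by have := m.isLt; omega⟩, by
    simp [Fin.le_def]⟩
  left_inv x := Subtype.ext (Fin.ext (by
    have h2 : j.val ≤ x.1.val := x.2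
    simp; omega))
  right_inv m := Fin.ext (by simp)

theorem prod_desc (n : ℕ) : ∏ i ∈ Finset.range n, (n - i) = n.factorial := by
  induction n with
  | zero => simp
  | succ n ih =>
    rw [Finset.prod_range_succ']
    simp only [Nat.succ_sub_succ_eq_sub, Nat.sub_zero]
    rw [ih, Nat.factorial_succ, mul_comm]

theorem count_b {n : ℕ} {a : Fin n → Fin n} (ha : IsParkingFunction a) :
    Nat.card {b : Fin n → Fin n // IsIPF a b} = n.factorial := by
  obtain ⟨o, ho⟩ := ha
  have e1 : {b : Fin n → Fin n // IsIPF a b} ≃ (∀ i, {x : Fin n // o i ≤ x}) :=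
    { toFun := fun b i => ⟨b.1 i, ((isIPF_iff ho b.1).mp b.2) i⟩
      invFun := fun c => ⟨fun i => (c i).1, (isIPF_iff ho _).mpr fun i => (c i).2⟩
      left_inv := fun b => rfl
      right_inv := fun c => rfl }
  rw [Nat.card_congr e1, Nat.card_pi]
  have hc : ∀ i, Nat.card {x : Fin n // o i ≤ x} = n - (o i).val := by
    intro i
    rw [Nat.card_congr (geEquiv (o i)), Nat.card_eq_fintype_card, Fintype.card_fin]
  rw [Finset.prod_congr rfl fun i _ => hc i]
  have hbij : Function.Bijective o := Finite.injective_iff_bijective.mp ho.1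
  rw [Fintype.prod_bijective o hbij _ (fun k : Fin n => n - k.val) (fun _ => rfl)]
  rw [Fin.prod_univ_eq_prod_range (fun i => n - i) n, prod_desc]



open Classical in
noncomputable def nextSpot {n : ℕ} (occ : Finset (ZMod (n+1))) (p : ZMod (n+1)) : ZMod (n+1) :=
  if h : ∃ k : ℕ, p + (k : ZMod (n+1)) ∉ occ then p + ((Nat.find h : ℕ) : ZMod (n+1)) else 0

noncomputable def outList {n : ℕ} (f : ℕ → ZMod (n+1)) : ℕ → List (ZMod (n+1))
  | 0 => []
  | i+1 => outList f i ++ [nextSpot (outList f i).toFinset (f i)]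

noncomputable def outF {n : ℕ} (f : ℕ → ZMod (n+1)) (i : ℕ) : ZMod (n+1) :=
  nextSpot (outList f i).toFinset (f i)

theorem outList_eq_map {n : ℕ} (f : ℕ → ZMod (n+1)) (i : ℕ) :
    outList f i = (List.range i).map (outF f) := by
  induction i with
  | zero => rfl
  | succ i ih => rw [List.range_succ, List.map_append, ← ih]; rfl

theorem outList_length {n : ℕ} (f : ℕ → ZMod (n+1)) (i : ℕ) :
    (outList f i).length = i := by
  rw [outList_eq_map]; simp

theorem mem_outList {n : ℕ} (f : ℕ → ZMod (n+1)) (i : ℕ) (x : ZMod (n+1)) :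
    x ∈ (outList f i).toFinset ↔ ∃ j, j < i ∧ outF f j = x := by
  simp [outList_eq_map]

theorem exists_free {n : ℕ} {occ : Finset (ZMod (n+1))} (hocc : occ.card < n+1)
    (p : ZMod (n+1)) : ∃ k : ℕ, p + (k : ZMod (n+1)) ∉ occ := by
  have hne : ∃ x : ZMod (n+1), x ∉ occ := by
    by_contra hc
    push_neg at hc
    have hsub : (Finset.univ : Finset (ZMod (n+1))) ⊆ occ := fun x _ => hc x
    have := Finset.card_le_card hsub
    rw [Finset.card_univ, ZMod.card] at this
    omega
  obtain ⟨x, hx⟩ := hne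
  refine ⟨(x - p).val, ?_⟩
  rw [ZMod.natCast_rightInverse (x - p)]
  have : p + (x - p) = x := by ring
  rwa [this]

theorem occ_card_lt {n : ℕ} (f : ℕ → ZMod (n+1)) {i : ℕ} (hi : i ≤ n) :
    (outList f i).toFinset.card < n+1 :=
  lt_of_le_of_lt (le_trans (List.toFinset_card_le _) (le_of_eq (outList_length f i))) (by omega)

theorem nextSpot_spec {n : ℕ} {occ : Finset (ZMod (n+1))} (hocc : occ.card < n+1)
    (p : ZMod (n+1)) :
    ∃ k : ℕ, nextSpot occ p = p + (k : ZMod (n+1)) ∧ p + (k : ZMod (n+1)) ∉ occ ∧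
      ∀ m : ℕ, m < k → p + (m : ZMod (n+1)) ∈ occ := by
  have h : ∃ k : ℕ, p + (k : ZMod (n+1)) ∉ occ := exists_free hocc p
  refine ⟨Nat.find h, ?_, Nat.find_spec h, fun m hm => ?_⟩
  · rw [nextSpot, dif_pos h]
  · exact not_not.mp (Nat.find_min h hm)

theorem nextSpot_eq {n : ℕ} {occ : Finset (ZMod (n+1))} {p : ZMod (n+1)} {K : ℕ}
    (hK : p + (K : ZMod (n+1)) ∉ occ)
    (hmin : ∀ m, m < K → p + (m : ZMod (n+1)) ∈ occ) :
    nextSpot occ p = p + (K : ZMod (n+1)) := by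
  have h : ∃ k : ℕ, p + (k : ZMod (n+1)) ∉ occ := ⟨K, hK⟩
  rw [nextSpot, dif_pos h]
  have hf : Nat.find h = K :=
    le_antisymm (Nat.find_le hK) (le_of_not_gt fun hc => (Nat.find_spec h) (hmin _ hc))
  rw [hf]

theorem outF_not_mem {n : ℕ} (f : ℕ → ZMod (n+1)) {i : ℕ} (hi : i ≤ n) :
    outF f i ∉ (outList f i).toFinset := by
  obtain ⟨k, h1, h2, _⟩ := nextSpot_spec (occ_card_lt f hi) (f i)
  rw [outF, h1]; exact h2

theorem outF_inj {n : ℕ} (f : ℕ → ZMod (n+1)) {j i : ℕ} (hji : j < i) (hi : i ≤ n) :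
    outF f j ≠ outF f i := by
  intro hEq
  have hmem : outF f j ∈ (outList f i).toFinset := (mem_outList f i _).mpr ⟨j, hji, rfl⟩
  rw [hEq] at hmem
  exact outF_not_mem f hi hmem

theorem outList_nodup {n : ℕ} (f : ℕ → ZMod (n+1)) {i : ℕ} (hi : i ≤ n) :
    (outList f i).Nodup := by
  induction i with
  | zero => exact List.nodup_nil
  | succ i ih =>
    have h1 : (outList f i).Nodup := ih (by omega)
    have h2 : outF f i ∉ outList f i := by
      intro hc
      exact outF_not_mem f (by omega : i ≤ n) (List.mem_toFinset.mpr hc)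
    show (outList f i ++ [outF f i]).Nodup
    simp [List.nodup_append, h1, List.disjoint_singleton, h2]
    exact fun a ha hae => h2 (hae ▸ ha)

theorem nextSpot_shift {n : ℕ} {occ : Finset (ZMod (n+1))} (hocc : occ.card < n+1)
    (p c : ZMod (n+1)) :
    nextSpot (occ.image (· + c)) (p + c) = nextSpot occ p + c := by
  have hiff : ∀ k : ℕ, (p + c + (k : ZMod (n+1)) ∉ occ.image (· + c)) ↔
      (p + (k : ZMod (n+1)) ∉ occ) := by
    intro k
    apply not_congr
    rw [Finset.mem_image]
    constructor
    · rintro ⟨x, hx, hxe⟩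
      have h2 : x + c = (p + (k : ZMod (n+1))) + c := by rw [hxe]; ring
      rwa [← add_right_cancel h2]
    · intro hmem
      exact ⟨p + (k : ZMod (n+1)), hmem, by ring⟩
  have h : ∃ k : ℕ, p + (k : ZMod (n+1)) ∉ occ := exists_free hocc p
  have h' : ∃ k : ℕ, p + c + (k : ZMod (n+1)) ∉ occ.image (· + c) :=
    h.imp fun k hk => (hiff k).mpr hk
  rw [nextSpot, nextSpot, dif_pos h', dif_pos h]
  have hfind : Nat.find h' = Nat.find h :=
    le_antisymm (Nat.find_le ((hiff _).mpr (Nat.find_spec h)))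
      (Nat.find_le ((hiff _).mp (Nat.find_spec h')))
  rw [hfind]; ring

theorem outList_shift {n : ℕ} (f g : ℕ → ZMod (n+1)) (c : ZMod (n+1)) {i : ℕ} (hi : i ≤ n)
    (hfg : ∀ j, j < i → g j = f j + c) : outList g i = (outList f i).map (· + c) := by
  induction i with
  | zero => rfl
  | succ i ih =>
    have ih' := ih (by omega) (fun j hj => hfg j (by omega))
    show outList g i ++ [nextSpot (outList g i).toFinset (g i)] =
      ((outList f i ++ [nextSpot (outList f i).toFinset (f i)]).map (· + c))
    rw [List.map_append, ← ih', hfg i (Nat.lt_succ_self i)]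
    congr 1
    show [nextSpot (outList g i).toFinset (f i + c)] = [nextSpot (outList f i).toFinset (f i) + c]
    congr 1
    have htf : (outList g i).toFinset = (outList f i).toFinset.image (· + c) := by
      rw [ih']
      ext x
      simp only [List.mem_toFinset, List.mem_map, Finset.mem_image]
    rw [htf]
    exact nextSpot_shift (occ_card_lt f (by omega)) (f i) c

theorem map_add_sum {M : Type*} [AddCommMonoid M] (c : M) (l : List M) :
    (l.map (· + c)).sum = l.sum + l.length • c := by
  induction l with
  | nil => simp
  | cons a l ih =>
    simp only [List.map_cons, List.sum_cons, ih, List.length_cons, succ_nsmul]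
    abel

def extCirc {n : ℕ} (g : Fin n → ZMod (n+1)) : ℕ → ZMod (n+1) :=
  fun i => if h : i < n then g ⟨i, h⟩ else 0

noncomputable def mspot {n : ℕ} (g : Fin n → ZMod (n+1)) : ZMod (n+1) :=
  (∑ x : ZMod (n+1), x) - (outList (extCirc g) n).sum

theorem mspot_shift {n : ℕ} (g : Fin n → ZMod (n+1)) (c : ZMod (n+1)) :
    mspot (fun i => g i + c) = mspot g + c := by
  have hL : outList (extCirc (fun i => g i + c)) n = (outList (extCirc g) n).map (· + c) :=
    outList_shift _ _ c le_rfl (fun j hj => by simp [extCirc, hj])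
  have hn1 : ((n : ℕ) : ZMod (n+1)) = -1 := by
    have h0 : ((n : ℕ) : ZMod (n+1)) + 1 = 0 := by
      have := ZMod.natCast_self (n+1)
      push_cast at this
      exact this
    linear_combination h0
  rw [mspot, mspot, hL, map_add_sum, outList_length, nsmul_eq_mul, hn1]
  ring

theorem not_mem_iff_mspot {n : ℕ} (g : Fin n → ZMod (n+1)) (x : ZMod (n+1)) :
    x ∉ (outList (extCirc g) n).toFinset ↔ x = mspot g := by
  set L := outList (extCirc g) n with hLdef
  have hnd : L.Nodup := outList_nodup _ le_rfl
  have hlen : L.length = n := outList_length _ _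
  have hcard : L.toFinset.card = n := by
    rw [List.toFinset_card_of_nodup hnd, hlen]
  have hcompl : (Finset.univ \ L.toFinset).card = 1 := by
    rw [Finset.card_sdiff_of_subset (Finset.subset_univ _), Finset.card_univ, ZMod.card, hcard]
    omega
  obtain ⟨y, hy⟩ := Finset.card_eq_one.mp hcompl
  have h1 : (Finset.univ \ L.toFinset).sum id + L.toFinset.sum id =
      (Finset.univ : Finset (ZMod (n+1))).sum id :=
    Finset.sum_sdiff (Finset.subset_univ _)
  rw [hy, Finset.sum_singleton] at h1
  have h2 : L.toFinset.sum id = L.sum := by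
    rw [List.sum_toFinset _ hnd]
    simp
  have hym : y = mspot g := by
    rw [mspot, ← hLdef, ← h2]
    have : (Finset.univ : Finset (ZMod (n+1))).sum id = ∑ x : ZMod (n+1), x := rfl
    rw [← this]
    rw [id] at h1
    linear_combination h1
  constructor
  · intro hx
    have : x ∈ Finset.univ \ L.toFinset := Finset.mem_sdiff.mpr ⟨Finset.mem_univ x, hx⟩
    rw [hy, Finset.mem_singleton] at this
    rw [this, hym]
  · intro hx
    have hymem : y ∈ Finset.univ \ L.toFinset := by rw [hy]; exact Finset.mem_singleton_self y
    rw [hx, ← hym]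
    exact (Finset.mem_sdiff.mp hymem).2


def iotaPF {n : ℕ} (a : Fin n → Fin n) : Fin n → ZMod (n+1) :=
  fun i => ((a i).val : ZMod (n+1))

theorem outF_of_outcome {n : ℕ} {a o : Fin n → Fin n} (h : IsAOutcome a o) :
    ∀ i, ∀ hi : i < n, outF (extCirc (iotaPF a)) i = (((o ⟨i, hi⟩).val : ℕ) : ZMod (n+1)) := by
  intro i
  induction i using Nat.strong_induction_on with
  | _ i ih =>
    intro hi
    set F := extCirc (iotaPF a) with hF
    have hmem : ∀ x, x ∈ (outList F i).toFinset ↔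
        ∃ j : Fin n, (j : ℕ) < i ∧ (((o j).val : ℕ) : ZMod (n+1)) = x := by
      intro x
      rw [mem_outList]
      constructor
      · rintro ⟨j, hj, hjx⟩
        exact ⟨⟨j, lt_trans hj hi⟩, hj, by rw [← ih j hj (lt_trans hj hi)]; exact hjx⟩
      · rintro ⟨j, hj, hjx⟩
        refine ⟨j.val, hj, ?_⟩
        rw [ih j.val hj j.isLt, Fin.eta]
        exact hjx
    set i' : Fin n := ⟨i, hi⟩ with hi'
    have hFi : F i = (((a i').val : ℕ) : ZMod (n+1)) := by
      rw [hF]; simp [extCirc, iotaPF, hi]; rfl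
    have hao : (a i').val ≤ (o i').val := (h.2 i').1
    set K : ℕ := (o i').val - (a i').val with hK
    have hcast : F i + (K : ZMod (n+1)) = (((o i').val : ℕ) : ZMod (n+1)) := by
      rw [hFi, ← Nat.cast_add]
      congr 1
      omega
    have hKnot : F i + (K : ZMod (n+1)) ∉ (outList F i).toFinset := by
      rw [hcast]
      intro hc
      obtain ⟨j, hji, hjx⟩ := (hmem _).mp hc
      have hval : (o j).val = (o i').val := by
        have h1 := congrArg ZMod.val hjx
        rwa [ZMod.val_cast_of_lt (by have := (o j).isLt; omega),
          ZMod.val_cast_of_lt (by have := (o i').isLt; omega)] at h1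
      have hji' : j = i' := h.1 (Fin.ext hval)
      rw [hji'] at hji
      exact absurd hji (lt_irrefl i)
    have hKmin : ∀ m, m < K → F i + (m : ZMod (n+1)) ∈ (outList F i).toFinset := by
      intro m hm
      have hlt : (a i').val + m < (o i').val := by omega
      have hsn : (a i').val + m < n := lt_of_lt_of_le hlt (le_of_lt (o i').isLt)
      set s : Fin n := ⟨(a i').val + m, hsn⟩ with hs
      have h1 : a i' ≤ s := by rw [Fin.le_def]; exact Nat.le_add_right _ _
      have h2 : s < o i' := by rw [Fin.lt_def]; exact hlt
      obtain ⟨j, hj, hjs⟩ := (h.2 i').2 s h1 h2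
      apply (hmem _).mpr
      refine ⟨j, Fin.lt_def.mp hj, ?_⟩
      rw [hjs, hFi, ← Nat.cast_add]
    rw [outF, nextSpot_eq hKnot hKmin, hcast]

theorem list_range_sum {M : Type*} [AddCommMonoid M] (f : ℕ → M) (m : ℕ) :
    ((List.range m).map f).sum = ∑ i ∈ Finset.range m, f i := by
  induction m with
  | zero => simp
  | succ m ih =>
    rw [List.range_succ, List.map_append, List.sum_append, Finset.sum_range_succ, ih]
    simp

theorem sum_fin_cast (n : ℕ) :
    ∑ k : Fin n, ((k.val : ℕ) : ZMod (n+1)) =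
      (∑ x : ZMod (n+1), x) - ((n : ℕ) : ZMod (n+1)) := by
  have hbij : Function.Bijective (fun k : Fin (n+1) => ((k.val : ℕ) : ZMod (n+1))) := by
    rw [Fintype.bijective_iff_injective_and_card]
    constructor
    · intro k k' hkk
      have h1 := congrArg ZMod.val hkk
      rw [ZMod.val_cast_of_lt k.isLt, ZMod.val_cast_of_lt k'.isLt] at h1
      exact Fin.ext h1
    · rw [Fintype.card_fin, ZMod.card]
  have hsum : ∑ k : Fin (n+1), ((k.val : ℕ) : ZMod (n+1)) = ∑ x : ZMod (n+1), x :=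
    Fintype.sum_bijective _ hbij _ _ (fun _ => rfl)
  rw [Fin.sum_univ_castSucc] at hsum
  simp only [Fin.coe_castSucc, Fin.val_last] at hsum
  linear_combination hsum

theorem mspot_iotaPF {n : ℕ} {a o : Fin n → Fin n} (h : IsAOutcome a o) :
    mspot (iotaPF a) = ((n : ℕ) : ZMod (n+1)) := by
  have hsum : (outList (extCirc (iotaPF a)) n).sum = ∑ k : Fin n, ((k.val : ℕ) : ZMod (n+1)) := by
    rw [outList_eq_map, list_range_sum,
      ← Fin.sum_univ_eq_sum_range (fun i => outF (extCirc (iotaPF a)) i) n]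
    have hout : ∀ i : Fin n, outF (extCirc (iotaPF a)) i.val = (((o i).val : ℕ) : ZMod (n+1)) := by
      intro i; rw [outF_of_outcome h i.val i.isLt, Fin.eta]
    rw [Finset.sum_congr rfl fun i _ => hout i]
    exact Fintype.sum_bijective o (Finite.injective_iff_bijective.mp h.1) _ _ (fun _ => rfl)
  rw [mspot, hsum, sum_fin_cast]
  ring

theorem back {n : ℕ} (hn : 1 ≤ n) (g : Fin n → ZMod (n+1))
    (hg : mspot g = ((n : ℕ) : ZMod (n+1))) :
    ∃ a : Fin n → Fin n, IsParkingFunction a ∧ iotaPF a = g := by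
  set F := extCirc g with hF
  have hFi : ∀ i : Fin n, F i.val = g i := by
    intro i; rw [hF]; simp [extCirc, i.isLt]
  have hvc : ∀ i : Fin n, F i.val = (((g i).val : ℕ) : ZMod (n+1)) := by
    intro i; rw [hFi i]; exact (ZMod.natCast_rightInverse (g i)).symm
  have hnL : ((n : ℕ) : ZMod (n+1)) ∉ (outList F n).toFinset :=
    (not_mem_iff_mspot g _).mpr hg.symm
  have hno : ∀ j, j < n → outF F j ≠ ((n : ℕ) : ZMod (n+1)) := by
    intro j hj hc
    exact hnL ((mem_outList F n _).mpr ⟨j, hj, hc⟩)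
  have hfree : ∀ i, i ≤ n → ((n : ℕ) : ZMod (n+1)) ∉ (outList F i).toFinset := by
    intro i hi hc
    obtain ⟨j, hj, hjx⟩ := (mem_outList F i _).mp hc
    exact hno j (by omega) hjx
  have main : ∀ i : Fin n, ∃ K : ℕ,
      (g i).val + K < n ∧
      (outF F i.val).val = (g i).val + K ∧
      (∀ m, m < K → F i.val + (m : ZMod (n+1)) ∈ (outList F i.val).toFinset) := by
    intro i
    have hgn : (g i).val < n + 1 := ZMod.val_lt (g i)
    have hwit : F i.val + ((n - (g i).val : ℕ) : ZMod (n+1)) ∉ (outList F i.val).toFinset := by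
      rw [hvc i, ← Nat.cast_add]
      have heq : (g i).val + (n - (g i).val) = n := by omega
      rw [heq]
      exact hfree i.val (le_of_lt i.isLt)
    obtain ⟨K, houtF', hKnot, hKmin⟩ := nextSpot_spec (occ_card_lt F (le_of_lt i.isLt)) (F i.val)
    have houtF : outF F i.val = F i.val + (K : ZMod (n+1)) := houtF'
    have hKle : K ≤ n - (g i).val := by
      by_contra hc
      exact hwit (hKmin _ (by omega))
    have hsum_lt : (g i).val + K < n + 1 := by omega
    have hval : (outF F i.val).val = (g i).val + K := by
      rw [houtF, hvc i, ← Nat.cast_add, ZMod.val_cast_of_lt hsum_lt]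
    have hne : (g i).val + K ≠ n := by
      intro hc
      apply hno i.val i.isLt
      rw [houtF, hvc i, ← Nat.cast_add, hc]
    exact ⟨K, by omega, hval, hKmin⟩
  choose K hK2 hK3 hK4 using main
  refine ⟨fun i => ⟨(g i).val, by have := hK2 i; omega⟩,
    ⟨fun i => ⟨(outF F i.val).val, by rw [hK3 i]; have := hK2 i; omega⟩, ?_, ?_⟩, ?_⟩
  · intro i i' he
    have h1 : (outF F i.val).val = (outF F i'.val).val := congrArg (fun x : Fin n => x.val) he
    have hvv : outF F i.val = outF F i'.val := by
      calc outF F i.val = (((outF F i.val).val : ℕ) : ZMod (n+1)) :=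
            (ZMod.natCast_rightInverse _).symm
        _ = (((outF F i'.val).val : ℕ) : ZMod (n+1)) := by rw [h1]
        _ = outF F i'.val := ZMod.natCast_rightInverse _
    by_contra hne
    have hvne : i.val ≠ i'.val := fun hc => hne (Fin.ext hc)
    rcases Nat.lt_or_ge i.val i'.val with hlt | hge
    · exact outF_inj F hlt (le_of_lt i'.isLt) hvv
    · have hlt : i'.val < i.val := by omega
      exact outF_inj F hlt (le_of_lt i.isLt) hvv.symm
  · intro i
    constructor
    · rw [Fin.le_def]
      show (g i).val ≤ (outF F i.val).val
      rw [hK3 i]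
      omega
    · intro s hs1 hs2
      have hs1' : (g i).val ≤ s.val := Fin.le_def.mp hs1
      have hs2' : s.val < (outF F i.val).val := Fin.lt_def.mp hs2
      rw [hK3 i] at hs2'
      have hmK : s.val - (g i).val < K i := by omega
      have hmem := hK4 i _ hmK
      have hcast : F i.val + ((s.val - (g i).val : ℕ) : ZMod (n+1)) =
          ((s.val : ℕ) : ZMod (n+1)) := by
        rw [hvc i, ← Nat.cast_add]
        congr 1
        omega
      rw [hcast] at hmem
      obtain ⟨j, hj, hjx⟩ := (mem_outList F i.val _).mp hmem
      have hjn : j < n := lt_trans hj i.isLt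
      refine ⟨⟨j, hjn⟩, Fin.lt_def.mpr hj, ?_⟩
      apply Fin.ext
      show (outF F j).val = s.val
      rw [hjx]
      exact ZMod.val_cast_of_lt (by have := s.isLt; omega)
  · funext i
    show (((g i).val : ℕ) : ZMod (n+1)) = g i
    exact ZMod.natCast_rightInverse (g i)

theorem card_mspot (n : ℕ) :
    Nat.card {g : Fin n → ZMod (n+1) // mspot g = ((n : ℕ) : ZMod (n+1))} * (n+1) =
      (n+1)^n := by
  have e : (Fin n → ZMod (n+1)) ≃
      {g : Fin n → ZMod (n+1) // mspot g = ((n : ℕ) : ZMod (n+1))} × ZMod (n+1) :=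
    { toFun := fun g => ⟨⟨fun i => g i - (mspot g - ((n : ℕ) : ZMod (n+1))), by
        have hfe : (fun i => g i - (mspot g - ((n : ℕ) : ZMod (n+1)))) =
            (fun i => g i + (-(mspot g - ((n : ℕ) : ZMod (n+1))))) :=
          funext fun i => sub_eq_add_neg _ _
        rw [hfe, mspot_shift]
        ring⟩, mspot g - ((n : ℕ) : ZMod (n+1))⟩
      invFun := fun p i => p.1.1 i + p.2
      left_inv := fun g => funext fun i => by ring
      right_inv := fun p => by
        obtain ⟨⟨f, hf⟩, c⟩ := p
        have hm : mspot (fun i => f i + c) = ((n : ℕ) : ZMod (n+1)) + c := by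
          rw [mspot_shift, hf]
        refine Prod.ext ?_ ?_
        · apply Subtype.ext
          funext i
          show f i + c - (mspot (fun i => f i + c) - ((n : ℕ) : ZMod (n+1))) = f i
          rw [hm]; ring
        · show mspot (fun i => f i + c) - ((n : ℕ) : ZMod (n+1)) = c
          rw [hm]; ring }
  have h1 : Nat.card (Fin n → ZMod (n+1)) = (n+1)^n := by
    rw [Nat.card_eq_fintype_card, Fintype.card_fun, ZMod.card, Fintype.card_fin]
  rw [← h1, Nat.card_congr e, Nat.card_prod, Nat.card_zmod]

theorem card_PF {n : ℕ} (hn : 1 ≤ n) :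
    Nat.card {a : Fin n → Fin n // IsParkingFunction a} = (n+1)^(n-1) := by
  have hb : Function.Bijective (fun a : {a : Fin n → Fin n // IsParkingFunction a} =>
      (⟨iotaPF a.1, by obtain ⟨o, ho⟩ := a.2; exact mspot_iotaPF ho⟩ :
        {g : Fin n → ZMod (n+1) // mspot g = ((n : ℕ) : ZMod (n+1))})) := by
    constructor
    · intro a a' hEq
      apply Subtype.ext
      funext i
      have h1 : iotaPF a.1 = iotaPF a'.1 := congrArg Subtype.val hEq
      have h2 := congrArg (fun f => ZMod.val (f i)) h1
      simp only [iotaPF] at h2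
      rw [ZMod.val_cast_of_lt (by have := (a.1 i).isLt; omega),
        ZMod.val_cast_of_lt (by have := (a'.1 i).isLt; omega)] at h2
      exact Fin.ext h2
    · rintro ⟨g, hg⟩
      obtain ⟨a, hpf, hiota⟩ := back hn g hg
      exact ⟨⟨a, hpf⟩, Subtype.ext hiota⟩
  rw [Nat.card_congr (Equiv.ofBijective _ hb)]
  have h2 := card_mspot n
  rw [show n = (n-1)+1 by omega, pow_succ] at h2
  have h3 : (n-1)+1 = n := by omega
  rw [h3] at h2
  exact Nat.eq_of_mul_eq_mul_right (by omega) h2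

end IPFaux

/-- `|IPF_n| = n! (n+1)^{n-1}`, and for each parking function `a`
there are exactly `n!` choices of `b` with `(a, b) ∈ IPF_n`. -/
theorem stmt1 {n : ℕ} (hn : 1 ≤ n) :
    Nat.card {p : (Fin n → Fin n) × (Fin n → Fin n) // IsIPF p.1 p.2} =
      n.factorial * (n + 1) ^ (n - 1) ∧
    ∀ a : Fin n → Fin n, IsParkingFunction a →
      Nat.card {b : Fin n → Fin n // IsIPF a b} = n.factorial := by
  constructor
  · have e : {p : (Fin n → Fin n) × (Fin n → Fin n) // IsIPF p.1 p.2} ≃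
        Σ a : {a : Fin n → Fin n // IsParkingFunction a}, {b : Fin n → Fin n // IsIPF a.1 b} :=
      { toFun := fun p => ⟨⟨p.1.1, IPFaux.IsIPF.pf p.2⟩, ⟨p.1.2, p.2⟩⟩
        invFun := fun s => ⟨(s.1.1, s.2.1), s.2.2⟩
        left_inv := fun p => rfl
        right_inv := fun s => rfl }
    rw [Nat.card_congr e]
    haveI : Fintype {a : Fin n → Fin n // IsParkingFunction a} := Fintype.ofFinite _
    haveI : ∀ a : {a : Fin n → Fin n // IsParkingFunction a},
        Fintype {b : Fin n → Fin n // IsIPF a.1 b} := fun a => Fintype.ofFinite _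
    rw [Nat.card_eq_fintype_card, Fintype.card_sigma]
    have hsum : ∀ a : {a : Fin n → Fin n // IsParkingFunction a},
        Fintype.card {b : Fin n → Fin n // IsIPF a.1 b} = n.factorial := fun a => by
      rw [← Nat.card_eq_fintype_card]; exact IPFaux.count_b a.2
    rw [Finset.sum_congr rfl fun a _ => hsum a, Finset.sum_const, smul_eq_mul,
      Finset.card_univ, ← Nat.card_eq_fintype_card, IPFaux.card_PF hn, mul_comm]
  · intro a ha
    exact IPFaux.count_b ha
end

section
/- If (a, b) is an interval parking function for n cars, then the conjugate b* is a parking function. -/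
lemma parking_of_count {n : ℕ} (c : Fin n → Fin n)
    (H : ∀ s : Fin n, s.val + 1 ≤ (Finset.univ.filter (fun i => c i ≤ s)).card) :
    IsParkingFunction c := by
  have key : ∀ m, m ≤ n → ∃ o : Fin n → Fin n,
      (∀ j k : Fin n, j.val < m → k.val < m → o j = o k → j = k) ∧
      ∀ j : Fin n, j.val < m → c j ≤ o j ∧
        ∀ s, c j ≤ s → s < o j → ∃ k, k < j ∧ o k = s := by
    intro m
    induction m with
    | zero => intro _; exact ⟨id, fun j k hj => by omega, fun j hj => by omega⟩
    | succ m ih =>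
      intro hmn
      obtain ⟨o, hinj, hprop⟩ := ih (by omega)
      set i : Fin n := ⟨m, by omega⟩ with hi
      set T : Finset (Fin n) :=
        (Finset.univ.filter (fun j : Fin n => j.val < m)).image o with hT
      have hTmem : ∀ u : Fin n, u ∈ T ↔ ∃ j : Fin n, j.val < m ∧ o j = u := by
        intro u; simp [hT]
      have hTcard : T.card ≤ m := by
        calc T.card ≤ (Finset.univ.filter (fun j : Fin n => j.val < m)).card :=
              Finset.card_image_le
          _ = m := by
              have : (Finset.univ.filter (fun j : Fin n => j.val < m)) =
                  Finset.Iio i := by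
                ext j; simp [Fin.lt_def, hi]
              rw [this, Fin.card_Iio]
      set F : Finset (Fin n) :=
        Finset.univ.filter (fun s : Fin n => c i ≤ s ∧ s ∉ T) with hF
      have hFne : F.Nonempty := by
        by_contra hFe
        rw [Finset.not_nonempty_iff_eq_empty] at hFe
        have hFmem : ∀ s : Fin n, c i ≤ s → s ∈ T := by
          intro s hs
          by_contra hsT
          have : s ∈ F := by simp [hF, hs, hsT]
          simp [hFe] at this
        -- free spots
        set Free : Finset (Fin n) := Finset.univ \ T with hFree
        have hFreene : Free.Nonempty := by
          have : Free.card = n - T.card := by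
            rw [hFree, Finset.card_sdiff_of_subset (Finset.subset_univ T)]
            simp
          have hpos : 0 < Free.card := by omega
          exact Finset.card_pos.mp hpos
        set t : Fin n := Free.max' hFreene with ht
        have htFree : t ∈ Free := Free.max'_mem hFreene
        have htT : t ∉ T := by
          rw [hFree] at htFree; simp at htFree; exact htFree
        have htmax : ∀ u : Fin n, t < u → u ∈ T := by
          intro u hu
          by_contra huT
          have : u ∈ Free := by rw [hFree]; simp [huT]
          have := Free.le_max' u this
          rw [← ht] at this
          exact absurd hu (not_lt.mpr this)
        have htc : t < c i := by
          by_contra hct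
          exact htT (hFmem t (not_lt.mp hct))
        -- occupiers of spots above t
        set S : Finset (Fin n) :=
          Finset.univ.filter (fun j : Fin n => j.val < m ∧ t < o j) with hS
        have hSimg : S.image o = Finset.Ioi t := by
          ext u
          constructor
          · intro hu
            simp [hS] at hu ⊢
            obtain ⟨j, ⟨_, hj2⟩, hj3⟩ := hu
            rw [← hj3]; exact hj2
          · intro hu
            simp at hu
            obtain ⟨j, hj, hoj⟩ := (hTmem u).mp (htmax u hu)
            simp [hS]
            exact ⟨j, ⟨hj, by rw [hoj]; exact hu⟩, hoj⟩
        have hScard : S.card = n - 1 - t.val := by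
          have hinjS : Set.InjOn o S := by
            intro x hx y hy hxy
            simp [hS] at hx hy
            exact hinj x y hx.1 hy.1 hxy
          rw [← Finset.card_image_of_injOn hinjS, hSimg, Fin.card_Ioi]
        -- everyone in S (and i) has preference > t
        have hSpref : ∀ j ∈ S, t < c j := by
          intro j hj
          simp [hS] at hj
          by_contra hcj
          obtain ⟨k, hk, hok⟩ := (hprop j hj.1).2 t (not_lt.mp hcj) hj.2
          exact htT ((hTmem t).mpr ⟨k, by
            have := Fin.lt_def.mp hk; omega, hok⟩)
        set G : Finset (Fin n) := Finset.univ.filter (fun j => t < c j) with hG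
        have hiS : i ∉ S := by simp [hS, hi]
        have hsub : insert i S ⊆ G := by
          intro j hj
          rcases Finset.mem_insert.mp hj with hj | hj
          · simp [hG, hj, htc]
          · simp [hG, hSpref j hj]
        have hGcard : n - t.val ≤ G.card := by
          have h1 : (insert i S).card = S.card + 1 := Finset.card_insert_of_notMem hiS
          have h2 := Finset.card_le_card hsub
          have := t.isLt
          omega
        have hGcomp : G.card + (Finset.univ.filter (fun j => ¬ t < c j)).card = n := by
          rw [hG, Finset.card_filter_add_card_filter_not]
          simp
        have hle : (Finset.univ.filter (fun j : Fin n => c j ≤ t)).card =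
            (Finset.univ.filter (fun j : Fin n => ¬ t < c j)).card := by
          congr 1; ext j; simp [not_lt]
        have := H t
        rw [hle] at this
        have := t.isLt
        omega
      -- define new spot
      set p : Fin n := F.min' hFne with hp
      have hpF : p ∈ F := F.min'_mem hFne
      have hpc : c i ≤ p := by
        have := hpF; simp [hF] at this; exact this.1
      have hpT : p ∉ T := by
        have := hpF; simp [hF] at this; exact this.2
      refine ⟨fun j => if j.val = m then p else o j, ?_, ?_⟩
      · intro j k hj hk hjk
        simp only at hjk
        by_cases hj1 : j.val = m <;> by_cases hk1 : k.val = m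
        · exact Fin.ext (by omega)
        · rw [if_pos hj1, if_neg hk1] at hjk
          exact absurd ((hTmem (o k)).mpr ⟨k, by omega, rfl⟩) (by rw [← hjk]; exact hpT)
        · rw [if_neg hj1, if_pos hk1] at hjk
          exact absurd ((hTmem (o j)).mpr ⟨j, by omega, rfl⟩) (by rw [hjk]; exact hpT)
        · rw [if_neg hj1, if_neg hk1] at hjk
          exact hinj j k (by omega) (by omega) hjk
      · intro j hj
        by_cases hj1 : j.val = m
        · have hji : j = i := Fin.ext hj1
          simp only [hj1, if_pos]
          subst hji
          refine ⟨hpc, ?_⟩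
          intro s hcs hsp
          have hsF : s ∉ F := by
            intro hsF
            exact absurd (F.min'_le s hsF) (not_le.mpr hsp)
          have hsT : s ∈ T := by
            by_contra hsT
            exact hsF (by simp [hF, hcs, hsT])
          obtain ⟨k, hk, hok⟩ := (hTmem s).mp hsT
          refine ⟨k, Fin.lt_def.mpr (by omega), ?_⟩
          simp only [if_neg (by omega : ¬ k.val = m)]
          exact hok
        · have hjm : j.val < m := by omega
          obtain ⟨h1, h2⟩ := hprop j hjm
          simp only [if_neg hj1]
          refine ⟨h1, ?_⟩
          intro s hcs hso
          obtain ⟨k, hk, hok⟩ := h2 s hcs hso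
          have hkm : k.val < m := by have := Fin.lt_def.mp hk; omega
          exact ⟨k, hk, by simp only [if_neg (by omega : ¬ k.val = m)]; exact hok⟩
  obtain ⟨o, hinj, hprop⟩ := key n le_rfl
  exact ⟨o, fun j k hjk => hinj j k j.isLt k.isLt hjk,
    fun j => hprop j j.isLt⟩

/-- Prop. `lots-of-facts`(1). If `(a, b)` is an IPF then
the conjugate `b*` is a parking function. -/
theorem stmt2 {n : ℕ} (a b : Fin n → Fin n) (h : IsIPF a b) :
    IsParkingFunction (pconj b) := by
  obtain ⟨o, hoinj, hB⟩ := h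
  set π : Fin n → Fin n := pconj o with hπ
  have hπinj : Function.Injective π := by
    intro x y hxy
    have := hoinj (Fin.rev_injective hxy)
    exact Fin.rev_injective this
  have hle : ∀ i, pconj b i ≤ π i := by
    intro i
    exact Fin.rev_le_rev.mpr (hB i.rev).2.1
  apply parking_of_count
  intro s
  have hsub : (Finset.univ.filter (fun i => π i ≤ s)) ⊆
      (Finset.univ.filter (fun i => pconj b i ≤ s)) := by
    intro i hi
    simp at hi ⊢
    exact le_trans (hle i) hi
  have hbij : Function.Bijective π := Finite.injective_iff_bijective.mp hπinj
  set e : Fin n ≃ Fin n := Equiv.ofBijective π hbij with he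
  have himg : (Finset.univ.filter (fun i => π i ≤ s)) =
      (Finset.univ.filter (fun u : Fin n => u ≤ s)).image e.symm := by
    ext i
    simp only [Finset.mem_image, Finset.mem_filter, Finset.mem_univ, true_and]
    constructor
    · intro hi
      exact ⟨π i, hi, by rw [he]; exact Equiv.ofBijective_symm_apply_apply _ _ i⟩
    · rintro ⟨u, hu, rfl⟩
      have : π (e.symm u) = u := e.apply_symm_apply u
      rw [this]; exact hu
  have hcard : (Finset.univ.filter (fun i => π i ≤ s)).card = s.val + 1 := by
    rw [himg, Finset.card_image_of_injective _ e.symm.injective]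
    have : (Finset.univ.filter (fun u : Fin n => u ≤ s)) = Finset.Iic s := by
      ext u; simp
    rw [this, Fin.card_Iic]
  calc s.val + 1 = (Finset.univ.filter (fun i => π i ≤ s)).card := hcard.symm
    _ ≤ _ := Finset.card_le_card hsub
end

section
/- If (a, b) is an interval parking function for n cars, then a ≤_C O(a) ≤_C b and O(b*)* ≤_C b. -/
/-- Prop. `lots-of-facts`(2). If `(a, b)` is an IPF then
`a ≤_C O(a) ≤_C b` and `O(b*)* ≤_C b`. -/
theorem stmt3 {n : ℕ} (a b : Fin n → Fin n) (h : IsIPF a b) :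
    (∀ o, IsAOutcome a o → ∀ i, a i ≤ o i ∧ o i ≤ b i) ∧
    (∀ o, IsAOutcome (pconj b) o → ∀ i, pconj o i ≤ b i) := by
  obtain ⟨o₀, hinj₀, h₀⟩ := h
  constructor
  · rintro o ⟨hinj, ho⟩
    have key : ∀ m : ℕ, ∀ i : Fin n, i.val = m → o i = o₀ i := by
      intro m
      induction m using Nat.strong_induction_on with
      | _ m IH =>
        intro i him
        rcases lt_trichotomy (o i) (o₀ i) with hlt | heq | hgt
        · obtain ⟨j, hj, hje⟩ := (h₀ i).2.2 (o i) (ho i).1 hlt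
          have : o j = o i := (IH j.val (him ▸ hj) j rfl).trans hje
          exact absurd (hinj this) (ne_of_lt hj)
        · exact heq
        · obtain ⟨j, hj, hje⟩ := (ho i).2 (o₀ i) (h₀ i).1 hgt
          have : o₀ j = o₀ i := (IH j.val (him ▸ hj) j rfl).symm.trans hje
          exact absurd (hinj₀ this) (ne_of_lt hj)
    intro i
    exact ⟨(ho i).1, (key i.val i rfl) ▸ (h₀ i).2.1⟩
  · rintro o ⟨hinj, ho⟩ i
    have h1 := (ho i.rev).1
    simp only [pconj, Fin.rev_rev] at h1
    have : (o i.rev).rev ≤ ((b i).rev).rev := Fin.rev_le_rev.mpr h1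
    simpa [pconj, Fin.rev_rev] using this
end

section
/- If (a, b) is an interval parking function for n cars, then O(a) ≥_B O(b*)* in the Bruhat order on the symmetric group S_n. -/
namespace Stmt4Aux

variable {n : ℕ}

/-- Number of `k < i` with `f k < s`. -/
def Lc (f : Fin n → Fin n) (i s : ℕ) : ℕ :=
  (Finset.univ.filter (fun k : Fin n => (k : ℕ) < i ∧ (f k : ℕ) < s)).card

/-- Number of `k ≥ t` with `f k ≥ j`. -/
def Mc (f : Fin n → Fin n) (t j : ℕ) : ℕ :=
  (Finset.univ.filter (fun k : Fin n => t ≤ (k : ℕ) ∧ j ≤ (f k : ℕ))).card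

lemma Lc_succ (f : Fin n → Fin n) (i s : ℕ) (h : i < n) :
    Lc f (i+1) s = Lc f i s + (if (f ⟨i, h⟩ : ℕ) < s then 1 else 0) := by
  classical
  unfold Lc
  have hset : Finset.univ.filter (fun k : Fin n => (k : ℕ) < i + 1 ∧ (f k : ℕ) < s)
      = Finset.univ.filter (fun k : Fin n => (k : ℕ) < i ∧ (f k : ℕ) < s)
        ∪ Finset.univ.filter (fun k : Fin n => k = ⟨i, h⟩ ∧ (f k : ℕ) < s) := by
    ext k
    simp only [Finset.mem_filter, Finset.mem_union, Finset.mem_univ, true_and]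
    constructor
    · rintro ⟨hk, hf⟩
      rcases Nat.lt_succ_iff_lt_or_eq.mp hk with h1 | h1
      · exact Or.inl ⟨h1, hf⟩
      · exact Or.inr ⟨Fin.ext h1, hf⟩
    · rintro (⟨hk, hf⟩ | ⟨hk, hf⟩)
      · exact ⟨Nat.lt_succ_of_lt hk, hf⟩
      · exact ⟨by rw [hk]; exact Nat.lt_succ_self i, hf⟩
  rw [hset, Finset.card_union_of_disjoint]
  · congr 1
    by_cases hf : (f ⟨i, h⟩ : ℕ) < s
    · rw [if_pos hf]
      rw [show (Finset.univ.filter (fun k : Fin n => k = ⟨i, h⟩ ∧ (f k : ℕ) < s))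
          = {(⟨i, h⟩ : Fin n)} from ?_]
      · simp
      · ext k
        simp only [Finset.mem_filter, Finset.mem_univ, true_and, Finset.mem_singleton]
        constructor
        · rintro ⟨hk, _⟩; exact hk
        · rintro rfl; exact ⟨rfl, hf⟩
    · rw [if_neg hf, Finset.card_eq_zero, Finset.filter_eq_empty_iff]
      rintro k - ⟨rfl, hc⟩
      exact hf hc
  · rw [Finset.disjoint_left]
    rintro k hk1 hk2
    simp only [Finset.mem_filter, Finset.mem_univ, true_and] at hk1 hk2
    rw [hk2.1] at hk1
    exact absurd hk1.1 (lt_irrefl i)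

lemma Lc_split (f : Fin n → Fin n) (i s c0 : ℕ) (h : c0 ≤ s) :
    Lc f i s = Lc f i c0
      + (Finset.univ.filter
          (fun k : Fin n => (k : ℕ) < i ∧ c0 ≤ (f k : ℕ) ∧ (f k : ℕ) < s)).card := by
  classical
  unfold Lc
  rw [← Finset.card_union_of_disjoint]
  · congr 1
    ext k
    simp only [Finset.mem_union, Finset.mem_filter, Finset.mem_univ, true_and]
    omega
  · rw [Finset.disjoint_left]
    intro k h1 h2
    simp only [Finset.mem_filter, Finset.mem_univ, true_and] at h1 h2
    omega

/-- Key greedy/exchange lemma: the A-outcome maximizes, in every prefix of cars,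
the number of cars parked in any initial segment of spots. -/
lemma greedy (c z π : Fin n → Fin n)
    (hzinj : Function.Injective z) (hcz : ∀ k, c k ≤ z k)
    (hfirst : ∀ k, ∀ s : Fin n, c k ≤ s → s < z k → ∃ j, j < k ∧ z j = s)
    (hπinj : Function.Injective π) (hcπ : ∀ k, c k ≤ π k) :
    ∀ i s, Lc π i s ≤ Lc z i s := by
  intro i
  induction i with
  | zero =>
    intro s
    simp [Lc]
  | succ i IH =>
    intro s
    by_cases hn : i < n
    · rw [Lc_succ π i s hn, Lc_succ z i s hn]
      by_cases hzs : (z ⟨i, hn⟩ : ℕ) < s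
      · have := IH s; split_ifs <;> omega
      · by_cases hπs : (π ⟨i, hn⟩ : ℕ) < s
        · rw [if_neg hzs, if_pos hπs]
          set I : Fin n := ⟨i, hn⟩ with hI
          set cI : ℕ := (c I : ℕ) with hcI
          have hc1 : cI ≤ (π I : ℕ) := hcπ I
          have hcs : cI < s := lt_of_le_of_lt hc1 hπs
          have hsz : s ≤ (z I : ℕ) := not_lt.mp hzs
          have hsplitz := Lc_split z i s cI (le_of_lt hcs)
          have hsplitπ := Lc_split π i s cI (le_of_lt hcs)
          have hCz : (Finset.univ.filter
              (fun k : Fin n => (k : ℕ) < i ∧ cI ≤ (z k : ℕ) ∧ (z k : ℕ) < s)).card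
              = (Finset.Ico cI s).card := by
            apply Finset.card_bij (fun k _ => (z k : ℕ))
            · intro k hk
              simp only [Finset.mem_filter, Finset.mem_univ, true_and] at hk
              simp only [Finset.mem_Ico]
              exact ⟨hk.2.1, hk.2.2⟩
            · intro k1 _ k2 _ heq
              exact hzinj (Fin.val_injective heq)
            · intro t ht
              simp only [Finset.mem_Ico] at ht
              have htn : t < n := by have := (z I).isLt; omega
              obtain ⟨j, hj, hzj⟩ := hfirst I ⟨t, htn⟩
                (by rw [Fin.le_def]; exact ht.1)
                (by rw [Fin.lt_def]; show t < (z I : ℕ); omega)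
              have hj' : (j : ℕ) < i := hj
              refine ⟨j, ?_, by rw [hzj]⟩
              simp only [Finset.mem_filter, Finset.mem_univ, true_and]
              rw [hzj]
              exact ⟨hj', ht.1, ht.2⟩
          have hmem : (π I : ℕ) ∈ Finset.Ico cI s := by
            simp only [Finset.mem_Ico]; exact ⟨hc1, hπs⟩
          have hCπ : (Finset.univ.filter
              (fun k : Fin n => (k : ℕ) < i ∧ cI ≤ (π k : ℕ) ∧ (π k : ℕ) < s)).card
              ≤ ((Finset.Ico cI s).erase (π I : ℕ)).card := by
            apply Finset.card_le_card_of_injOn (fun k => (π k : ℕ))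
            · intro k hk
              simp only [Finset.mem_coe, Finset.mem_filter, Finset.mem_univ, true_and] at hk
              rw [Finset.mem_coe, Finset.mem_erase]
              refine ⟨?_, by simp only [Finset.mem_Ico]; exact ⟨hk.2.1, hk.2.2⟩⟩
              intro heq
              have hkI : k = I := hπinj (Fin.val_injective heq)
              rw [hkI] at hk
              exact absurd hk.1 (lt_irrefl i)
            · intro k1 _ k2 _ heq
              exact hπinj (Fin.val_injective heq)
          rw [Finset.card_erase_of_mem hmem, Nat.card_Ico] at hCπ
          rw [Nat.card_Ico] at hCz
          have hIH := IH cI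
          omega
        · rw [if_neg hzs, if_neg hπs]
          simpa using IH s
    · have e : ∀ f : Fin n → Fin n, Lc f (i+1) s = Lc f i s := by
        intro f
        unfold Lc
        congr 1
        ext k
        simp only [Finset.mem_filter, Finset.mem_univ, true_and]
        have := k.isLt
        omega
      rw [e, e]
      exact IH s

lemma Lc_pconj (f : Fin n → Fin n) (i s : ℕ) :
    Lc (pconj f) i s = Mc f (n - i) (n - s) := by
  unfold Lc Mc
  apply Finset.card_bij (fun k _ => k.rev)
  · intro k hk
    rw [Finset.mem_filter] at hk ⊢
    simp only [Finset.mem_filter, Finset.mem_univ, true_and, pconj, Fin.val_rev] at hk ⊢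
    have h1 := k.isLt
    have h2 := (f k.rev).isLt
    omega
  · intro k1 _ k2 _ heq
    exact Fin.rev_injective heq
  · intro b hb
    simp only [Finset.mem_filter, Finset.mem_univ, true_and] at hb
    refine ⟨b.rev, ?_, b.rev_rev⟩
    rw [Finset.mem_filter]
    simp only [Finset.mem_filter, Finset.mem_univ, true_and, pconj, Fin.rev_rev, Fin.val_rev]
    have h1 := b.isLt
    have h2 := (f b).isLt
    omega

lemma card_ge (f : Fin n → Fin n) (hf : Function.Bijective f) (j : ℕ) :
    (Finset.univ.filter (fun k : Fin n => j ≤ (f k : ℕ))).card = n - j := by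
  rw [← Nat.card_Ico j n]
  apply Finset.card_bij (fun k _ => (f k : ℕ))
  · intro k hk
    simp only [Finset.mem_filter, Finset.mem_univ, true_and] at hk
    simp only [Finset.mem_Ico]
    exact ⟨hk, (f k).isLt⟩
  · intro k1 _ k2 _ heq
    exact hf.1 (Fin.val_injective heq)
  · intro t ht
    simp only [Finset.mem_Ico] at ht
    obtain ⟨k, hk⟩ := hf.2 ⟨t, ht.2⟩
    refine ⟨k, ?_, by rw [hk]⟩
    simp only [Finset.mem_filter, Finset.mem_univ, true_and, hk]
    exact ht.1

lemma bcount_add_Mc (f : Fin n → Fin n) (hf : Function.Bijective f) (i j : Fin n) :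
    bcount f i j + Mc f ((i : ℕ) + 1) (j : ℕ) = n - (j : ℕ) := by
  classical
  rw [← card_ge f hf (j : ℕ)]
  unfold bcount Mc
  rw [← Finset.card_union_of_disjoint]
  · congr 1
    ext k
    simp only [Finset.mem_union, Finset.mem_filter, Finset.mem_univ, true_and, Fin.le_def]
    omega
  · rw [Finset.disjoint_left]
    intro k h1 h2
    simp only [Finset.mem_filter, Finset.mem_univ, true_and, Fin.le_def] at h1 h2
    omega

lemma pconj_injective {f : Fin n → Fin n} (hf : Function.Injective f) :
    Function.Injective (pconj f) := by
  intro k1 k2 h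
  have := hf (Fin.rev_injective h)
  exact Fin.rev_injective this

/-- If `(a,b)` has a B-outcome `o` and `a` has an A-outcome `x`, then `x = o`. -/
lemma outcome_unique (a b o x : Fin n → Fin n) (ho : IsBOutcome a b o)
    (hx : IsAOutcome a x) : ∀ k, x k = o k := by
  obtain ⟨hoinj, ho2⟩ := ho
  obtain ⟨hxinj, hx2⟩ := hx
  have main : ∀ m : ℕ, ∀ k : Fin n, (k : ℕ) = m → x k = o k := by
    intro m
    induction m using Nat.strong_induction_on with
    | _ m IH =>
      intro k hk
      rcases lt_trichotomy (x k) (o k) with hlt | heq | hlt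
      · obtain ⟨j, hj, hoj⟩ := (ho2 k).2.2 (x k) (hx2 k).1 hlt
        have hIH : x j = o j := IH (j : ℕ) (by rw [← hk]; exact hj) j rfl
        have : x j = x k := by rw [hIH, hoj]
        have hjk : j = k := hxinj this
        rw [hjk] at hj
        exact absurd hj (lt_irrefl k)
      · exact heq
      · obtain ⟨j, hj, hxj⟩ := (hx2 k).2 (o k) (ho2 k).1 hlt
        have hIH : x j = o j := IH (j : ℕ) (by rw [← hk]; exact hj) j rfl
        have : o j = o k := by rw [← hIH, hxj]
        have hjk : j = k := hoinj this
        rw [hjk] at hj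
        exact absurd hj (lt_irrefl k)
  exact fun k => main (k : ℕ) k rfl

end Stmt4Aux

/-- Theorem `thm:bruhat`. If `(a, b)` is an IPF, `x = O(a)` and
`y = O(b*)*`, then `x ≥_B y` in Bruhat order. -/
theorem stmt4 {n : ℕ} (a b : Fin n → Fin n) (h : IsIPF a b) (x y : Equiv.Perm (Fin n))
    (hx : IsAOutcome a ⇑x) (hy : IsAOutcome (pconj b) (pconj ⇑y)) :
    BruhatGE x y := by
  classical
  obtain ⟨o, ho⟩ := h
  have hxo : ∀ k, ⇑x k = o k := Stmt4Aux.outcome_unique a b o ⇑x ho hx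
  have hgreedy : ∀ i s, Stmt4Aux.Lc (pconj ⇑x) i s ≤ Stmt4Aux.Lc (pconj ⇑y) i s := by
    apply Stmt4Aux.greedy (pconj b)
    · exact hy.1
    · exact fun k => (hy.2 k).1
    · exact fun k s h1 h2 => (hy.2 k).2 s h1 h2
    · exact Stmt4Aux.pconj_injective x.injective
    · intro k
      show (b k.rev).rev ≤ (⇑x k.rev).rev
      rw [Fin.rev_le_rev, hxo k.rev]
      exact (ho.2 k.rev).2.1
  have hM : ∀ i j : Fin n, Stmt4Aux.Mc ⇑x ((i : ℕ) + 1) (j : ℕ)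
      ≤ Stmt4Aux.Mc ⇑y ((i : ℕ) + 1) (j : ℕ) := by
    intro i j
    have h1 := hgreedy (n - ((i : ℕ) + 1)) (n - (j : ℕ))
    rw [Stmt4Aux.Lc_pconj, Stmt4Aux.Lc_pconj] at h1
    have hi : n - (n - ((i : ℕ) + 1)) = (i : ℕ) + 1 := by have := i.isLt; omega
    have hj : n - (n - (j : ℕ)) = (j : ℕ) := by have := j.isLt; omega
    rwa [hi, hj] at h1
  intro i j
  have e1 := Stmt4Aux.bcount_add_Mc ⇑x x.bijective i j
  have e2 := Stmt4Aux.bcount_add_Mc ⇑y y.bijective i j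
  have := hM i j
  omega
end

section
/- Let x, y be permutations of [n]. Then the number of interval parking functions (a,b) with O(a) = x and O(b*)* = y equals the product ∏_{i=1}^{n} c_i·d_i. -/
/-- `c_i = max{ j ∈ [1, x(i)] : x⁻¹(x(i) - k) ≤ i for all 0 ≤ k ≤ j-1 }` (one-indexed). -/
noncomputable def cval {n : ℕ} (x : Equiv.Perm (Fin n)) (i : Fin n) : ℕ :=
  sSup {j : ℕ | 1 ≤ j ∧ j ≤ (x i).val + 1 ∧
    ∀ k < j, (x.symm ⟨(x i).val - k, by have := (x i).isLt; omega⟩).val ≤ i.val}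

/-- `J_i = max{ j ∈ [1, n+1-y(i)] : y⁻¹(y(i)+s) ≥ i for all 0 ≤ s ≤ j-1 }` (one-indexed). -/
noncomputable def Jval {n : ℕ} (y : Equiv.Perm (Fin n)) (i : Fin n) : ℕ :=
  sSup {j : ℕ | 1 ≤ j ∧ j ≤ n - (y i).val ∧
    ∀ s < j, ∀ h : (y i).val + s < n, i.val ≤ (y.symm ⟨(y i).val + s, h⟩).val}

/-- `d_i = #{ k ∈ [0, J_i - 1] : y(i) + k ≥ x(i) }`. -/
noncomputable def dval {n : ℕ} (x y : Equiv.Perm (Fin n)) (i : Fin n) : ℕ :=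
  ((Finset.range (Jval y i)).filter (fun k => (x i).val ≤ (y i).val + k)).card

namespace Stmt5Aux

variable {n : ℕ}

/-- Condition on `a i` alone. -/
def Pa (x : Equiv.Perm (Fin n)) (i v : Fin n) : Prop :=
  v ≤ x i ∧ ∀ s : Fin n, v ≤ s → s < x i → x.symm s < i

/-- Condition on `b i` alone. -/
def Pb (x y : Equiv.Perm (Fin n)) (i w : Fin n) : Prop :=
  x i ≤ w ∧ y i ≤ w ∧ ∀ s : Fin n, y i < s → s ≤ w → i < y.symm s

lemma outcome_unique {a b o : Fin n → Fin n} {x : Equiv.Perm (Fin n)}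
    (hB : IsBOutcome a b o) (hA : IsAOutcome a ⇑x) : o = ⇑x := by
  obtain ⟨oinj, ho⟩ := hB
  obtain ⟨xinj, hx⟩ := hA
  have H : ∀ m : ℕ, ∀ i : Fin n, i.val = m → o i = x i := by
    intro m
    induction m using Nat.strong_induction_on with
    | _ m IH =>
      intro i him
      rcases lt_trichotomy (o i) (x i) with h | h | h
      · obtain ⟨j, hj, hxj⟩ := (hx i).2 (o i) (ho i).1 h
        have hoj : o j = o i := by
          rw [IH j.val (by omega) j rfl]; exact hxj
        exact absurd (oinj hoj) (ne_of_lt hj)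
      · exact h
      · obtain ⟨j, hj, hoj⟩ := (ho i).2.2 (x i) (hx i).1 h
        have hxj : x j = x i := by
          rw [← IH j.val (by omega) j rfl]; exact hoj
        exact absurd (xinj hxj) (ne_of_lt hj)
  funext i; exact H i.val i rfl

lemma main_iff (x y : Equiv.Perm (Fin n)) (a b : Fin n → Fin n) :
    (IsIPF a b ∧ IsAOutcome a ⇑x ∧ IsAOutcome (pconj b) (pconj ⇑y)) ↔
      ((∀ i, Pa x i (a i)) ∧ (∀ i, Pb x y i (b i))) := by
  constructor
  · rintro ⟨⟨o, hB⟩, hAx, hAy⟩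
    have hox : o = ⇑x := outcome_unique hB hAx
    refine ⟨fun i => ⟨(hAx.2 i).1, fun s hvs hsx => ?_⟩, fun i => ?_⟩
    · obtain ⟨j, hj, hxj⟩ := (hAx.2 i).2 s hvs hsx
      have : x.symm s = j := by rw [← hxj]; exact x.symm_apply_apply j
      rwa [this]
    · refine ⟨?_, ?_, ?_⟩
      · have := (hB.2 i).2.1
        rwa [hox] at this
      · have := (hAy.2 i.rev).1
        simp only [pconj, Fin.rev_rev] at this
        rwa [Fin.rev_le_rev] at this
      · intro s hys hsb
        have h1 : pconj b i.rev ≤ s.rev := by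
          simp only [pconj, Fin.rev_rev]
          rwa [Fin.rev_le_rev]
        have h2 : s.rev < pconj ⇑y i.rev := by
          simp only [pconj, Fin.rev_rev]
          rwa [Fin.rev_lt_rev]
        obtain ⟨j, hj, hyj⟩ := (hAy.2 i.rev).2 s.rev h1 h2
        simp only [pconj] at hyj
        have hyj' : y j.rev = s := by
          have := congrArg Fin.rev hyj
          rwa [Fin.rev_rev, Fin.rev_rev] at this
        have hsymm : y.symm s = j.rev := by rw [← hyj']; exact y.symm_apply_apply _
        rw [hsymm]
        rwa [← Fin.rev_lt_rev, Fin.rev_rev]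
  · rintro ⟨hPa, hPb⟩
    have hAx : IsAOutcome a ⇑x :=
      ⟨x.injective, fun i => ⟨(hPa i).1, fun s hs1 hs2 =>
        ⟨x.symm s, (hPa i).2 s hs1 hs2, x.apply_symm_apply s⟩⟩⟩
    refine ⟨⟨⇑x, x.injective, fun i => ⟨(hPa i).1, (hPb i).1, fun s hs1 hs2 =>
        ⟨x.symm s, (hPa i).2 s hs1 hs2, x.apply_symm_apply s⟩⟩⟩, hAx, ?_⟩
    constructor
    · intro u v h
      simp only [pconj] at h
      have := y.injective (Fin.rev_injective h)
      exact Fin.rev_injective this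
    · intro i
      constructor
      · simp only [pconj]
        rw [Fin.rev_le_rev]
        exact (hPb i.rev).2.1
      · intro s h1 h2
        simp only [pconj] at h1 h2
        have hy1 : y i.rev < s.rev := by
          rwa [← Fin.rev_lt_rev, Fin.rev_rev] at h2
        have hy2 : s.rev ≤ b i.rev := by
          rwa [← Fin.rev_le_rev, Fin.rev_rev] at h1
        have hlt := (hPb i.rev).2.2 s.rev hy1 hy2
        refine ⟨(y.symm s.rev).rev, ?_, ?_⟩
        · rwa [← Fin.rev_rev i, Fin.rev_lt_rev]
        · simp only [pconj, Fin.rev_rev]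
          rw [y.apply_symm_apply, Fin.rev_rev]

lemma card_Pa (x : Equiv.Perm (Fin n)) (i : Fin n) :
    Nat.card {v : Fin n // Pa x i v} = cval x i := by
  classical
  set X := (x i).val with hXdef
  have hXlt : X < n := (x i).isLt
  set S : Set ℕ := {j : ℕ | 1 ≤ j ∧ j ≤ (x i).val + 1 ∧
    ∀ k < j, (x.symm ⟨(x i).val - k, by have := (x i).isLt; omega⟩).val ≤ i.val} with hSdef
  have hbdd : BddAbove S := ⟨X + 1, fun j hj => hj.2.1⟩
  have h1 : 1 ∈ S := by
    refine ⟨le_refl 1, by omega, fun k hk => ?_⟩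
    interval_cases k
    have he : (⟨(x i).val - 0, by have := (x i).isLt; omega⟩ : Fin n) = x i :=
      Fin.ext (by simp)
    rw [he, x.symm_apply_apply]
  have hc_mem : cval x i ∈ S := Nat.sSup_mem ⟨1, h1⟩ hbdd
  have hc_max : ∀ j ∈ S, j ≤ cval x i := fun j hj => le_csSup hbdd hj
  set c := cval x i with hcdef
  have key : ∀ v : Fin n, Pa x i v ↔ (v.val ≤ X ∧ X < v.val + c) := by
    intro v
    constructor
    · rintro ⟨hvx, hmid⟩
      have hvX : v.val ≤ X := hvx
      have hmemS : X - v.val + 1 ∈ S := by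
        refine ⟨by omega, by omega, fun k hk => ?_⟩
        rcases Nat.eq_zero_or_pos k with hk0 | hk0
        · subst hk0
          have he : (⟨(x i).val - 0, by have := (x i).isLt; omega⟩ : Fin n) = x i :=
            Fin.ext (by simp)
          rw [he, x.symm_apply_apply]
        · set s : Fin n := ⟨X - k, by omega⟩ with hsdef
          have h1s : v ≤ s := by
            rw [Fin.le_def]; simp only [hsdef]; omega
          have h2s : s < x i := by
            rw [Fin.lt_def]; simp only [hsdef]; omega
          exact le_of_lt ((hmid s h1s h2s))
      have := hc_max _ hmemS
      omega
    · rintro ⟨h1v, h2v⟩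
      refine ⟨h1v, fun s hvs hsx => ?_⟩
      have hsX : s.val < X := hsx
      have hvsv : v.val ≤ s.val := hvs
      have hkc : X - s.val < c := by omega
      have := hc_mem.2.2 (X - s.val) hkc
      have he : (⟨(x i).val - (X - s.val), by have := (x i).isLt; omega⟩ : Fin n) = s :=
        Fin.ext (by simp only [Fin.val_mk]; omega)
      rw [he] at this
      have hne : x.symm s ≠ i := by
        intro h
        have : s = x i := by rw [← h, x.apply_symm_apply]
        rw [this] at hsX; omega
      rw [Fin.lt_def]
      have := Fin.val_ne_of_ne hne
      omega
  have hc1 : 1 ≤ c := hc_mem.1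
  have hcX : c ≤ X + 1 := hc_mem.2.1
  rw [Nat.card_congr (Equiv.subtypeEquivRight key), Nat.card_eq_fintype_card,
    Fintype.card_subtype]
  have hIco : c = (Finset.Ico (X + 1 - c) (X + 1)).card := by
    rw [Nat.card_Ico]; omega
  rw [hIco]
  refine Finset.card_bij' (fun v _ => v.val) (fun m hm => (⟨m, by
      simp only [Finset.mem_Ico] at hm; omega⟩ : Fin n)) ?_ ?_ ?_ ?_
  · intro v hv
    simp only [Finset.mem_filter, Finset.mem_univ, true_and] at hv
    simp only [Finset.mem_Ico]
    omega
  · intro m hm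
    simp only [Finset.mem_Ico] at hm
    simp only [Finset.mem_filter, Finset.mem_univ, true_and, Fin.val_mk]
    constructor <;> omega
  · intro v hv; exact Fin.ext rfl
  · intro m hm; rfl

lemma card_Pb (x y : Equiv.Perm (Fin n)) (i : Fin n) :
    Nat.card {w : Fin n // Pb x y i w} = dval x y i := by
  classical
  set Y := (y i).val with hYdef
  set X := (x i).val with hXdef
  have hYlt : Y < n := (y i).isLt
  set S : Set ℕ := {j : ℕ | 1 ≤ j ∧ j ≤ n - (y i).val ∧
    ∀ s < j, ∀ h : (y i).val + s < n, i.val ≤ (y.symm ⟨(y i).val + s, h⟩).val} with hSdef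
  have hbdd : BddAbove S := ⟨n - Y, fun j hj => hj.2.1⟩
  have h1 : 1 ∈ S := by
    refine ⟨le_refl 1, by omega, fun s hs h => ?_⟩
    interval_cases s
    have he : (⟨(y i).val + 0, h⟩ : Fin n) = y i := Fin.ext (by simp)
    rw [he, y.symm_apply_apply]
  have hJ_mem : Jval y i ∈ S := Nat.sSup_mem ⟨1, h1⟩ hbdd
  have hJ_max : ∀ j ∈ S, j ≤ Jval y i := fun j hj => le_csSup hbdd hj
  set J := Jval y i with hJdef
  have hJ1 : 1 ≤ J := hJ_mem.1
  have hJn : J ≤ n - Y := hJ_mem.2.1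
  have key : ∀ w : Fin n, Pb x y i w ↔ (Y ≤ w.val ∧ w.val < Y + J ∧ X ≤ w.val) := by
    intro w
    constructor
    · rintro ⟨hxw, hyw, hmid⟩
      have hYw : Y ≤ w.val := hyw
      have hXw : X ≤ w.val := hxw
      have hwlt : w.val < n := w.isLt
      have hmemS : w.val - Y + 1 ∈ S := by
        refine ⟨by omega, by omega, fun s hs h => ?_⟩
        rcases Nat.eq_zero_or_pos s with hs0 | hs0
        · subst hs0
          have he : (⟨(y i).val + 0, h⟩ : Fin n) = y i := Fin.ext (by simp)
          rw [he, y.symm_apply_apply]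
        · set t : Fin n := ⟨Y + s, h⟩ with htdef
          have h1t : y i < t := by rw [Fin.lt_def]; simp only [htdef]; omega
          have h2t : t ≤ w := by rw [Fin.le_def]; simp only [htdef]; omega
          exact le_of_lt (hmid t h1t h2t)
      have := hJ_max _ hmemS
      refine ⟨hYw, by omega, hXw⟩
    · rintro ⟨h1w, h2w, h3w⟩
      refine ⟨h3w, h1w, fun s hys hsw => ?_⟩
      have hYs : Y < s.val := hys
      have hsws : s.val ≤ w.val := hsw
      have hk : s.val - Y < J := by omega
      have hh : (y i).val + (s.val - Y) < n := by omega
      have := hJ_mem.2.2 (s.val - Y) hk hh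
      have he : (⟨(y i).val + (s.val - Y), hh⟩ : Fin n) = s :=
        Fin.ext (by simp only [Fin.val_mk]; omega)
      rw [he] at this
      have hne : y.symm s ≠ i := by
        intro h
        have : s = y i := by rw [← h, y.apply_symm_apply]
        rw [this] at hYs; omega
      rw [Fin.lt_def]
      have := Fin.val_ne_of_ne hne
      omega
  rw [Nat.card_congr (Equiv.subtypeEquivRight key), Nat.card_eq_fintype_card,
    Fintype.card_subtype]
  unfold dval
  rw [← hJdef]
  refine Finset.card_bij' (fun w _ => w.val - Y) (fun k hk => (⟨Y + k, by
      simp only [Finset.mem_filter, Finset.mem_range] at hk; omega⟩ : Fin n)) ?_ ?_ ?_ ?_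
  · intro w hw
    simp only [Finset.mem_filter, Finset.mem_univ, true_and] at hw
    simp only [Finset.mem_filter, Finset.mem_range]
    constructor <;> omega
  · intro k hk
    simp only [Finset.mem_filter, Finset.mem_range] at hk
    simp only [Finset.mem_filter, Finset.mem_univ, true_and, Fin.val_mk]
    refine ⟨by omega, by omega, by omega⟩
  · intro w hw
    simp only [Finset.mem_filter, Finset.mem_univ, true_and] at hw
    exact Fin.ext (by simp only [Fin.val_mk]; omega)
  · intro k hk
    simp only [Finset.mem_filter, Finset.mem_range] at hk
    simp only [Nat.add_sub_cancel_left]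

end Stmt5Aux

/-- The number of IPFs `(a,b)` with `O(a) = x` and `O(b*)* = y`
equals `∏ᵢ cᵢ·dᵢ`. -/
theorem stmt5 {n : ℕ} (x y : Equiv.Perm (Fin n)) :
    Nat.card {p : (Fin n → Fin n) × (Fin n → Fin n) //
        IsIPF p.1 p.2 ∧ IsAOutcome p.1 ⇑x ∧ IsAOutcome (pconj p.2) (pconj ⇑y)} =
      ∏ i : Fin n, cval x i * dval x y i := by
  classical
  open Stmt5Aux in
  have e1 : {p : (Fin n → Fin n) × (Fin n → Fin n) //
        IsIPF p.1 p.2 ∧ IsAOutcome p.1 ⇑x ∧ IsAOutcome (pconj p.2) (pconj ⇑y)} ≃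
      ({a : Fin n → Fin n // ∀ i, Pa x i (a i)} ×
        {b : Fin n → Fin n // ∀ i, Pb x y i (b i)}) :=
    (Equiv.subtypeEquivRight fun p : (Fin n → Fin n) × (Fin n → Fin n) => Stmt5Aux.main_iff x y p.1 p.2).trans
      (Equiv.subtypeProdEquivProd
        (p := fun a : Fin n → Fin n => ∀ i, Stmt5Aux.Pa x i (a i))
        (q := fun b : Fin n → Fin n => ∀ i, Stmt5Aux.Pb x y i (b i)))
  rw [Nat.card_congr e1, Nat.card_prod,
    Nat.card_congr (Equiv.subtypePiEquivPi (p := fun i (v : Fin n) => Stmt5Aux.Pa x i v)),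
    Nat.card_congr (Equiv.subtypePiEquivPi (p := fun i (w : Fin n) => Stmt5Aux.Pb x y i w)),
    Nat.card_pi, Nat.card_pi]
  simp only [Stmt5Aux.card_Pa, Stmt5Aux.card_Pb]
  rw [← Finset.prod_mul_distrib]
end

section
/- Reachability Criterion: for permutations x, y of [n], x ⊵_R y if and only if for every i ∈ [n] the integer interval [y(i), x(i)] is contained in the set y[i,n] = {y(i), y(i+1), …, y(n)}. -/
lemma outcome_eq {n : ℕ} {a b x o : Fin n → Fin n}
    (hx : IsAOutcome a x) (ho : IsBOutcome a b o) : ∀ i, o i = x i := by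
  have key : ∀ N : ℕ, ∀ i : Fin n, i.val < N → o i = x i := by
    intro N
    induction N with
    | zero => intro i hi; omega
    | succ N ih =>
      intro i hi
      rcases lt_trichotomy (o i) (x i) with h | h | h
      · obtain ⟨j, hj, hxj⟩ := (hx.2 i).2 (o i) (ho.2 i).1 h
        have hj' : j.val < i.val := hj
        have : o j = o i := by rw [ih j (by omega), hxj]
        exact absurd (ho.1 this) (Fin.ne_of_lt hj)
      · exact h
      · obtain ⟨j, hj, hoj⟩ := (ho.2 i).2.2 (x i) (hx.2 i).1 h
        have hj' : j.val < i.val := hj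
        have : x j = x i := by rw [← ih j (by omega), hoj]
        exact absurd (hx.1 this) (Fin.ne_of_lt hj)
  intro i; exact key (i.val + 1) i (by omega)

/-- Theorem `thm:RC`, the Reachability Criterion.
`x ⊵_R y` iff for every `i ∈ [n]`, `[y(i), x(i)] ⊆ y[i, n]`. -/
theorem stmt6 {n : ℕ} (x y : Equiv.Perm (Fin n)) :
    Reaches ⇑x ⇑y ↔
      ∀ i m : Fin n, y i ≤ m → m ≤ x i → ∃ k : Fin n, i ≤ k ∧ y k = m := by
  constructor
  · rintro ⟨a, b, ⟨o, ho⟩, hx, hy⟩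
    intro i m hyi hxi
    rcases eq_or_lt_of_le hyi with h | h
    · exact ⟨i, le_refl i, h⟩
    · have hox := outcome_eq hx ho
      have hmb : m ≤ b i := le_trans hxi (by rw [← hox i]; exact (ho.2 i).2.1)
      have h1 : pconj b i.rev ≤ m.rev := by
        simpa [pconj, Fin.rev_rev] using hmb
      have h2 : m.rev < pconj y i.rev := by
        simpa [pconj, Fin.rev_rev] using h
      obtain ⟨j, hj, hyj⟩ := (hy.2 i.rev).2 m.rev h1 h2
      refine ⟨j.rev, ?_, ?_⟩
      · have : i.rev.rev < j.rev := Fin.rev_lt_rev.mpr hj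
        rw [Fin.rev_rev] at this
        exact le_of_lt this
      · exact Fin.rev_injective hyj
  · intro hcond
    refine ⟨⇑x, fun i => max (x i) (y i),
      ⟨⇑x, x.injective, fun i => ⟨le_refl _, le_max_left _ _,
        fun s hs hs' => absurd hs (not_le.mpr hs')⟩⟩,
      ⟨x.injective, fun i => ⟨le_refl _,
        fun s hs hs' => absurd hs (not_le.mpr hs')⟩⟩, ?_⟩
    constructor
    · intro u v huv
      have : y u.rev = y v.rev := Fin.rev_injective huv
      exact Fin.rev_injective (y.injective this)
    · intro i
      constructor
      · show (max (x i.rev) (y i.rev)).rev ≤ (y i.rev).rev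
        exact Fin.rev_le_rev.mpr (le_max_right _ _)
      · intro s hs1 hs2
        set k := i.rev with hk
        have hys : y k < s.rev := by
          have : (y k).rev.rev < s.rev := Fin.rev_lt_rev.mpr hs2
          rwa [Fin.rev_rev] at this
        have hsb : s.rev ≤ max (x k) (y k) := by
          have : s.rev ≤ (max (x k) (y k)).rev.rev := Fin.rev_le_rev.mpr hs1
          rwa [Fin.rev_rev] at this
        have hsx : s.rev ≤ x k := by
          rcases le_max_iff.mp hsb with h | h
          · exact h
          · exact absurd h (not_le.mpr hys)
        obtain ⟨k', hk', hyk'⟩ := hcond k s.rev (le_of_lt hys) hsx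
        have hne : k < k' := by
          rcases lt_or_eq_of_le hk' with h | h
          · exact h
          · exfalso; rw [← h] at hyk'; exact absurd hyk' (ne_of_lt hys)
        refine ⟨k'.rev, ?_, ?_⟩
        · have : k'.rev < k.rev := Fin.rev_lt_rev.mpr hne
          rwa [hk, Fin.rev_rev] at this
        · show (y k'.rev.rev).rev = s
          rw [Fin.rev_rev, hyk', Fin.rev_rev]
end

section
/- If x, y are permutations of [n] with x = s_a·y for some a ∈ [n−1] and ℓ(x) = ℓ(y) + 1 (i.e., x covers y in the left weak order), then x ⊵_R y. -/
lemma isAOutcome_self {n : ℕ} (x : Equiv.Perm (Fin n)) : IsAOutcome ⇑x ⇑x :=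
  ⟨x.injective, fun i => ⟨le_refl _, fun s hs1 hs2 =>
    absurd (lt_of_le_of_lt hs1 hs2) (lt_irrefl _)⟩⟩

lemma swap_lt_imp {n : ℕ} (p q u v : Fin n) (hpq : p.val + 1 = q.val)
    (h : ¬(u = q ∧ v = p)) (hlt : Equiv.swap p q u < Equiv.swap p q v) : u < v := by
  rw [Equiv.swap_apply_def, Equiv.swap_apply_def] at hlt
  rw [not_and] at h
  split_ifs at hlt <;>
    simp only [Fin.lt_def, Fin.ext_iff] at * <;> omega

/-- Prop. `lem:inv-1`. If `x = s_a · y` covers `y` in left weak order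
(i.e. `ℓ(x) = ℓ(y) + 1`), then `x ⊵_R y`. -/
theorem stmt7 {n : ℕ} (x y : Equiv.Perm (Fin n)) (a : ℕ) (ha1 : 1 ≤ a) (ha2 : a ≤ n - 1)
    (hx : x = sgen n a * y) (hl : invCount ⇑x = invCount ⇑y + 1) :
    Reaches ⇑x ⇑y := by
  have hn : 2 ≤ n := by omega
  have hqn : a < n := by omega
  set p : Fin n := ⟨a - 1, by omega⟩ with hp
  set q : Fin n := ⟨a, hqn⟩ with hq
  have hpq : p < q := by simp [Fin.lt_def, hp, hq]; omega
  have hpqv : p.val + 1 = q.val := by simp [hp, hq]; omega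
  have hxk : ∀ k, x k = Equiv.swap p q (y k) := by
    intro k
    rw [hx]
    have : sgen n a = Equiv.swap p q := by
      unfold sgen
      rw [dif_pos ⟨ha1, hqn⟩]
    rw [this]
    rfl
  set i : Fin n := y.symm p with hi
  set j : Fin n := y.symm q with hj
  have hyi : y i = p := y.apply_symm_apply p
  have hyj : y j = q := y.apply_symm_apply q
  have hij : i ≠ j := by
    intro h
    rw [h, hyj] at hyi
    exact absurd hyi (ne_of_gt hpq)
  have hxi : x i = q := by rw [hxk, hyi, Equiv.swap_apply_left]
  have hxj : x j = p := by rw [hxk, hyj, Equiv.swap_apply_right]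
  have hxother : ∀ k, k ≠ i → k ≠ j → x k = y k := by
    intro k h1 h2
    rw [hxk]
    apply Equiv.swap_apply_of_ne_of_ne
    · intro h
      exact h1 (by rw [hi, ← h, Equiv.symm_apply_apply])
    · intro h
      exact h2 (by rw [hj, ← h, Equiv.symm_apply_apply])
  have hilt : i < j := by
    by_contra hc
    have hji : j < i := lt_of_le_of_ne (not_lt.mp hc) (Ne.symm hij)
    have hcard : invCount ⇑x ≤ invCount ⇑y := by
      unfold invCount
      apply Finset.card_le_card
      intro pr hpr
      simp only [Finset.mem_filter, Finset.mem_univ, true_and] at hpr ⊢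
      obtain ⟨huv, hxvu⟩ := hpr
      refine ⟨huv, ?_⟩
      rw [hxk, hxk] at hxvu
      refine swap_lt_imp p q _ _ hpqv ?_ hxvu
      rintro ⟨h1, h2⟩
      have e2 : pr.2 = j := by rw [hj, ← h1, Equiv.symm_apply_apply]
      have e1 : pr.1 = i := by rw [hi, ← h2, Equiv.symm_apply_apply]
      rw [e1, e2] at huv
      exact absurd huv (not_lt.mpr (le_of_lt hji))
    omega
  refine ⟨⇑x, (fun k => if k = i then q else y k), ⟨⇑x, x.injective, fun k =>
    ⟨le_refl _, ?_, fun s h1 h2 => absurd (lt_of_le_of_lt h1 h2) (lt_irrefl _)⟩⟩,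
    isAOutcome_self x, ?_, ?_⟩
  · show x k ≤ if k = i then q else y k
    by_cases hk : k = i
    · rw [if_pos hk, hk, hxi]
    · rw [if_neg hk]
      by_cases hk2 : k = j
      · rw [hk2, hxj, hyj]
        exact le_of_lt hpq
      · rw [hxother k hk hk2]
  · intro k l h
    have h1 : y k.rev = y l.rev := Fin.rev_injective h
    have h2 : k.rev = l.rev := y.injective h1
    exact Fin.rev_injective h2
  · intro k
    by_cases hk : k.rev = i
    · have hBk : pconj (fun k => if k = i then q else y k) k = q.rev := by
        simp only [pconj, if_pos hk]
      have hyk : pconj (⇑y) k = p.rev := by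
        simp only [pconj, hk, hyi]
      rw [hBk, hyk]
      constructor
      · exact Fin.rev_le_rev.mpr (le_of_lt hpq)
      · intro s hs1 hs2
        have hs : s = q.rev := by
          apply Fin.ext
          have v1 : (q.rev : Fin n).val = n - 1 - a := by
            simp [Fin.val_rev, hq]; omega
          have v2 : (p.rev : Fin n).val = n - a := by
            simp [Fin.val_rev, hp]; omega
          have := hs1
          rw [Fin.le_def] at hs1
          rw [Fin.lt_def] at hs2
          omega
        refine ⟨j.rev, ?_, ?_⟩
        · have : k = i.rev := by rw [← hk, Fin.rev_rev]
          rw [this]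
          exact Fin.rev_lt_rev.mpr hilt
        · simp only [pconj, Fin.rev_rev, hyj, hs]
    · have hBk : pconj (fun k => if k = i then q else y k) k = pconj (⇑y) k := by
        simp only [pconj, if_neg hk]
      rw [hBk]
      exact ⟨le_refl _, fun s h1 h2 => absurd (lt_of_le_of_lt h1 h2) (lt_irrefl _)⟩
end

section
/- Pseudoreachability lies between the left weak order and the Bruhat order on S_n: for all permutations x, y of [n], if x ≥_W y then x ≥_P y, and if x ≥_P y then x ≥_B y. -/
/-- count of `k < I` with `f k < J` (auxiliary). -/
def gcount {n : ℕ} (f : Fin n → Fin n) (I J : ℕ) : ℕ :=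
  (Finset.univ.filter (fun k : Fin n => k.val < I ∧ (f k).val < J)).card

lemma gcount_split {n : ℕ} (f : Fin n → Fin n) (I J J' : ℕ) (h : J' ≤ J) :
    gcount f I J = gcount f I J' +
      (Finset.univ.filter (fun k : Fin n => k.val < I ∧ J' ≤ (f k).val ∧ (f k).val < J)).card := by
  unfold gcount
  rw [← Finset.card_filter_add_card_filter_not
      (p := fun k : Fin n => (f k).val < J')
      (s := Finset.univ.filter (fun k : Fin n => k.val < I ∧ (f k).val < J))]
  congr 1
  · apply congrArg Finset.card
    rw [Finset.filter_filter]
    apply Finset.filter_congr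
    intro k _
    constructor
    · rintro ⟨⟨h1, _⟩, h3⟩; exact ⟨h1, h3⟩
    · rintro ⟨h1, h3⟩; exact ⟨⟨h1, lt_of_lt_of_le h3 h⟩, h3⟩
  · apply congrArg Finset.card
    rw [Finset.filter_filter]
    apply Finset.filter_congr
    intro k _
    simp only [not_lt]
    tauto

lemma gcount_succ {n : ℕ} (f : Fin n → Fin n) (I J : ℕ) (hI : I < n) :
    gcount f (I + 1) J = gcount f I J + (if (f ⟨I, hI⟩).val < J then 1 else 0) := by
  unfold gcount
  by_cases h : (f ⟨I, hI⟩).val < J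
  · rw [if_pos h]
    have hset : Finset.univ.filter (fun k : Fin n => k.val < I + 1 ∧ (f k).val < J)
        = insert ⟨I, hI⟩ (Finset.univ.filter (fun k : Fin n => k.val < I ∧ (f k).val < J)) := by
      ext k
      simp only [Finset.mem_filter, Finset.mem_insert, Finset.mem_univ, true_and, Fin.ext_iff]
      constructor
      · rintro ⟨h1, h2⟩
        rcases Nat.lt_or_ge k.val I with h' | h'
        · exact Or.inr ⟨h', h2⟩
        · left; omega
      · rintro (h1 | ⟨h1, h2⟩)
        · refine ⟨by omega, ?_⟩
          convert h using 3
          exact Fin.ext h1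
        · exact ⟨by omega, h2⟩
    rw [hset, Finset.card_insert_of_notMem
      (by simp only [Finset.mem_filter, Finset.mem_univ, true_and, not_and]; intro hk; omega)]
  · rw [if_neg h]
    have hset2 : Finset.univ.filter (fun k : Fin n => k.val < I + 1 ∧ (f k).val < J)
        = Finset.univ.filter (fun k : Fin n => k.val < I ∧ (f k).val < J) := by
      apply Finset.filter_congr
      intro k _
      constructor
      · rintro ⟨h1, h2⟩
        refine ⟨?_, h2⟩
        rcases Nat.lt_or_ge k.val I with h' | h'
        · exact h'
        · exfalso
          have : k = ⟨I, hI⟩ := Fin.ext (by simp only [Fin.val_mk]; omega)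
          rw [this] at h2; exact h h2
      · rintro ⟨h1, h2⟩; exact ⟨by omega, h2⟩
    rw [hset2]; omega

lemma gcount_stable {n : ℕ} (f : Fin n → Fin n) (I J : ℕ) (hI : n ≤ I) :
    gcount f (I + 1) J = gcount f I J := by
  unfold gcount
  apply congrArg Finset.card
  apply Finset.filter_congr
  intro k _
  have := k.isLt
  constructor <;> rintro ⟨h1, h2⟩ <;> exact ⟨by omega, h2⟩

lemma gcount_zero {n : ℕ} (f : Fin n → Fin n) (J : ℕ) : gcount f 0 J = 0 := by
  unfold gcount
  rw [Finset.card_eq_zero]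
  ext k
  simp

lemma gcount_mono {n : ℕ} {c z w : Fin n → Fin n} (hz : IsAOutcome c z)
    (hw : Function.Injective w) (hcw : ∀ i, c i ≤ w i) :
    ∀ I J, gcount w I J ≤ gcount z I J := by
  intro I
  induction I with
  | zero => intro J; rw [gcount_zero, gcount_zero]
  | succ I ih =>
    intro J
    rcases Nat.lt_or_ge I n with hI | hI
    swap
    · rw [gcount_stable w I J hI, gcount_stable z I J hI]; exact ih J
    rw [gcount_succ w I J hI, gcount_succ z I J hI]
    set i : Fin n := ⟨I, hI⟩ with hidef
    by_cases hwJ : (w i).val < J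
    swap
    · rw [if_neg hwJ]
      have := ih J
      omega
    by_cases hzJ : (z i).val < J
    · rw [if_pos hwJ, if_pos hzJ]
      have := ih J
      omega
    -- hard case
    rw [if_pos hwJ, if_neg hzJ]
    set ci := (c i).val with hcidef
    have hciJ : ci < J := lt_of_le_of_lt (hcw i) hwJ
    have hJzi : J ≤ (z i).val := le_of_not_gt hzJ
    have hJn : J ≤ n := le_trans hJzi (le_of_lt (z i).isLt)
    -- split both counts at ci
    rw [gcount_split w I J ci (le_of_lt hciJ), gcount_split z I J ci (le_of_lt hciJ)]
    set Bw := Finset.univ.filter (fun k : Fin n => k.val < I ∧ ci ≤ (w k).val ∧ (w k).val < J)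
      with hBw
    set Bz := Finset.univ.filter (fun k : Fin n => k.val < I ∧ ci ≤ (z k).val ∧ (z k).val < J)
      with hBz
    have hBw_card : Bw.card ≤ J - ci - 1 := by
      have h1 : Bw.card ≤ ((Finset.Ico ci J).erase (w i).val).card := by
        apply Finset.card_le_card_of_injOn (fun k => (w k).val)
        · intro k hk
          rw [hBw] at hk
          simp only [Finset.mem_coe, Finset.mem_filter, Finset.mem_univ, true_and] at hk
          rw [Finset.mem_coe, Finset.mem_erase, Finset.mem_Ico]
          refine ⟨?_, hk.2.1, hk.2.2⟩
          intro heq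
          have : w k = w i := Fin.ext heq
          have : k = i := hw this
          rw [this] at hk
          simp only [hidef, Fin.val_mk] at hk
          omega
        · intro k _ k' _ heq
          exact hw (Fin.ext heq)
      have h2 : ((Finset.Ico ci J).erase (w i).val).card = J - ci - 1 := by
        rw [Finset.card_erase_of_mem (by rw [Finset.mem_Ico]; exact ⟨hcw i, hwJ⟩),
          Nat.card_Ico]
      omega
    have hBz_card : J - ci ≤ Bz.card := by
      have hnpos : Nonempty (Fin n) := ⟨i⟩
      have key : ∀ s ∈ Finset.Ico ci J, ∃ k : Fin n,
          k.val < I ∧ ci ≤ (z k).val ∧ (z k).val < J ∧ (z k).val = s := by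
        intro s hs
        rw [Finset.mem_Ico] at hs
        have hsn : s < n := by omega
        obtain ⟨k, hki, hzk⟩ := (hz.2 i).2 ⟨s, hsn⟩
          (by rw [Fin.le_def]; exact hs.1)
          (by rw [Fin.lt_def]; simp only [Fin.val_mk]; omega)
        refine ⟨k, ?_, ?_, ?_, ?_⟩
        · exact hki
        · rw [hzk]; exact hs.1
        · rw [hzk]; exact hs.2
        · rw [hzk]
      choose! pick hpick using key
      have h1 : (Finset.Ico ci J).card ≤ Bz.card := by
        apply Finset.card_le_card_of_injOn pick
        · intro s hs
          rw [hBz]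
          simp only [Finset.mem_coe, Finset.mem_filter, Finset.mem_univ, true_and]
          obtain ⟨h1, h2, h3, _⟩ := hpick s hs
          exact ⟨h1, h2, h3⟩
        · intro s hs s' hs' heq
          have e1 := (hpick s hs).2.2.2
          have e2 := (hpick s' hs').2.2.2
          rw [heq] at e1
          rw [e1] at e2
          exact e2
      rw [Nat.card_Ico] at h1
      exact h1
    have hIH := ih ci
    omega

lemma aoutcome_unique {n : ℕ} {a o o' : Fin n → Fin n}
    (h : IsAOutcome a o) (h' : IsAOutcome a o') : o = o' := by
  have main : ∀ m : ℕ, ∀ i : Fin n, i.val = m → o i = o' i := by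
    intro m
    induction m using Nat.strong_induction_on with
    | _ m ih =>
      intro i him
      have hlt : ∀ j : Fin n, j < i → o j = o' j := by
        intro j hj
        exact ih j.val (by omega) j rfl
      by_contra hne
      rcases lt_or_gt_of_ne hne with hl | hl
      · obtain ⟨j, hji, hj⟩ := (h'.2 i).2 (o i) (h.2 i).1 hl
        have heq : o j = o i := by rw [hlt j hji]; exact hj
        have := h.1 heq
        rw [this] at hji
        exact lt_irrefl _ hji
      · obtain ⟨j, hji, hj⟩ := (h.2 i).2 (o' i) (h'.2 i).1 hl
        have heq : o' j = o' i := by rw [← hlt j hji]; exact hj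
        have := h'.1 heq
        rw [this] at hji
        exact lt_irrefl _ hji
  funext i
  exact main i.val i rfl

lemma pconj_injective {n : ℕ} {f : Fin n → Fin n} (hf : Function.Injective f) :
    Function.Injective (pconj f) := by
  intro i j hij
  unfold pconj at hij
  have := Fin.rev_injective (hf (Fin.rev_injective hij))
  simpa using congrArg Fin.rev this

lemma bcount_pconj {n : ℕ} {x : Fin n → Fin n} (hx : Function.Bijective x) (i j : Fin n) :
    bcount x i j + gcount (pconj x) i.rev.val (j.rev.val + 1) = j.rev.val + 1 := by
  set g := pconj x with hg
  -- step 1: bcount x i j = card T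
  have step1 : bcount x i j =
      (Finset.univ.filter (fun k : Fin n => i.rev ≤ k ∧ g k ≤ j.rev)).card := by
    unfold bcount
    apply Finset.card_bij (fun k _ => k.rev)
    · intro k hk
      simp only [Finset.mem_filter, Finset.mem_univ, true_and] at hk ⊢
      constructor
      · exact Fin.rev_le_rev.mpr hk.1
      · have hgk : g k.rev = (x k).rev := by rw [hg]; unfold pconj; rw [Fin.rev_rev]
        rw [hgk]
        exact Fin.rev_le_rev.mpr hk.2
    · intro k _ k' _ heq
      exact Fin.rev_injective heq
    · intro t ht
      simp only [Finset.mem_filter, Finset.mem_univ, true_and] at ht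
      refine ⟨t.rev, ?_, by rw [Fin.rev_rev]⟩
      simp only [Finset.mem_filter, Finset.mem_univ, true_and]
      have h1 := ht.1
      have h2 := ht.2
      constructor
      · rw [← Fin.rev_rev t] at h1
        exact Fin.rev_le_rev.mp h1
      · have hgt : g t = (x t.rev).rev := rfl
        rw [hgt] at h2
        exact Fin.rev_le_rev.mp h2
  -- step 2: the full count is j.rev + 1
  have step2 : (Finset.univ.filter (fun k : Fin n => g k ≤ j.rev)).card = j.rev.val + 1 := by
    have hgbij : Function.Bijective g := by
      constructor
      · exact pconj_injective hx.1
      · intro v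
        obtain ⟨u, hu⟩ := hx.2 v.rev
        exact ⟨u.rev, by rw [hg]; unfold pconj; rw [Fin.rev_rev, hu, Fin.rev_rev]⟩
    have : (Finset.univ.filter (fun k : Fin n => g k ≤ j.rev)).card
        = (Finset.univ.filter (fun v : Fin n => v ≤ j.rev)).card := by
      apply Finset.card_bij (fun k _ => g k)
      · intro k hk
        simp only [Finset.mem_filter, Finset.mem_univ, true_and] at hk ⊢
        exact hk
      · intro k _ k' _ heq
        exact hgbij.1 heq
      · intro v hv
        simp only [Finset.mem_filter, Finset.mem_univ, true_and] at hv
        obtain ⟨u, hu⟩ := hgbij.2 v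
        exact ⟨u, by simp only [Finset.mem_filter, Finset.mem_univ, true_and, hu]; exact hv,
          hu⟩
    rw [this]
    have : (Finset.univ.filter (fun v : Fin n => v ≤ j.rev)) = Finset.Iic j.rev := by
      ext v; simp
    rw [this, Fin.card_Iic]
  -- step 3: partition
  have part := Finset.card_filter_add_card_filter_not
      (p := fun k : Fin n => k.val < i.rev.val)
      (s := Finset.univ.filter (fun k : Fin n => g k ≤ j.rev))
  have e1 : (Finset.univ.filter (fun k : Fin n => g k ≤ j.rev)).filter
      (fun k : Fin n => k.val < i.rev.val)
      = Finset.univ.filter (fun k : Fin n => k.val < i.rev.val ∧ (g k).val < j.rev.val + 1) := by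
    rw [Finset.filter_filter]
    apply Finset.filter_congr
    intro k _
    rw [Fin.le_def]
    omega
  have e2 : (Finset.univ.filter (fun k : Fin n => g k ≤ j.rev)).filter
      (fun k : Fin n => ¬ k.val < i.rev.val)
      = Finset.univ.filter (fun k : Fin n => i.rev ≤ k ∧ g k ≤ j.rev) := by
    rw [Finset.filter_filter]
    apply Finset.filter_congr
    intro k _
    rw [Fin.le_def (a := i.rev)]
    constructor
    · rintro ⟨h1, h2⟩; omega
    · rintro ⟨h1, h2⟩; omega
  rw [e1, e2] at part
  rw [step1]
  unfold gcount
  omega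

lemma reaches_bruhat {n : ℕ} (x y : Equiv.Perm (Fin n)) (h : Reaches ⇑x ⇑y) : BruhatGE x y := by
  obtain ⟨a, b, ⟨o, ho⟩, hax, hby⟩ := h
  have hao : IsAOutcome a o := ⟨ho.1, fun i => ⟨(ho.2 i).1, (ho.2 i).2.2⟩⟩
  have hxo : ⇑x = o := aoutcome_unique hax hao
  have hxb : ∀ i, ⇑x i ≤ b i := by
    intro i
    rw [hxo]
    exact (ho.2 i).2.1
  have hw : Function.Injective (pconj ⇑x) := pconj_injective x.injective
  have hcw : ∀ i, pconj b i ≤ pconj ⇑x i := by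
    intro i
    exact Fin.rev_le_rev.mpr (hxb i.rev)
  have hM := gcount_mono hby hw hcw
  intro i j
  have h1 := bcount_pconj x.bijective i j
  have h2 := bcount_pconj y.bijective i j
  have h3 := hM i.rev.val (j.rev.val + 1)
  omega

lemma swap_lt_iff (n v : ℕ) (hv : v + 1 < n) (a b : Fin n) (hab : a < b) :
    Equiv.swap ⟨v, by omega⟩ ⟨v+1, hv⟩ b < Equiv.swap ⟨v, by omega⟩ ⟨v+1, hv⟩ a
      ↔ a = ⟨v, by omega⟩ ∧ b = ⟨v+1, hv⟩ := by
  simp only [Equiv.swap_apply_def]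
  split_ifs <;>
    (simp only [Fin.lt_def, Fin.ext_iff, Fin.val_mk] at *) <;> omega

lemma invCount_swap_succ {n v : ℕ} (hv : v + 1 < n) (w : Equiv.Perm (Fin n))
    (hpq : w.symm ⟨v, by omega⟩ < w.symm ⟨v+1, hv⟩) :
    invCount ⇑((Equiv.swap (⟨v, by omega⟩ : Fin n) ⟨v+1, hv⟩) * w) = invCount ⇑w + 1 := by
  set A : Fin n := ⟨v, by omega⟩ with hA
  set B : Fin n := ⟨v+1, hv⟩ with hB
  set p : Fin n := w.symm A with hp
  set q : Fin n := w.symm B with hq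
  have hwp : w p = A := w.apply_symm_apply A
  have hwq : w q = B := w.apply_symm_apply B
  have hAltB : A < B := by rw [Fin.lt_def]; simp [hA, hB]
  unfold invCount
  have hset : Finset.univ.filter
        (fun pr : Fin n × Fin n => pr.1 < pr.2 ∧ (Equiv.swap A B * w) pr.2 < (Equiv.swap A B * w) pr.1)
      = insert (p, q)
        (Finset.univ.filter (fun pr : Fin n × Fin n => pr.1 < pr.2 ∧ w pr.2 < w pr.1)) := by
    ext ⟨u, t⟩
    simp only [Finset.mem_filter, Finset.mem_insert, Finset.mem_univ, true_and]
    simp only [Prod.mk.injEq, Equiv.Perm.coe_mul, Function.comp_apply]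
    constructor
    · rintro ⟨hut, hlt⟩
      rcases lt_trichotomy (w u) (w t) with hw | hw | hw
      · left
        have hh := (swap_lt_iff n v hv (w u) (w t) hw).mp hlt
        constructor
        · apply w.injective; rw [hh.1, hwp]
        · apply w.injective; rw [hh.2, hwq]
      · exact absurd (w.injective hw) (ne_of_lt hut)
      · exact Or.inr ⟨hut, hw⟩
    · rintro (⟨rfl, rfl⟩ | ⟨hut, hw⟩)
      · refine ⟨hpq, ?_⟩
        rw [hwp, hwq, Equiv.swap_apply_left, Equiv.swap_apply_right]
        exact hAltB
      · refine ⟨hut, ?_⟩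
        rcases lt_trichotomy (Equiv.swap A B (w t)) (Equiv.swap A B (w u)) with h | h | h
        · exact h
        · exact absurd (w.injective ((Equiv.swap A B).injective h)) (ne_of_gt hut)
        · exfalso
          have hh := (swap_lt_iff n v hv (w t) (w u) hw).mp h
          have ht' : t = p := by apply w.injective; rw [hh.1, hwp]
          have hu' : u = q := by apply w.injective; rw [hh.2, hwq]
          rw [ht', hu'] at hut
          exact absurd hpq (not_lt_of_gt hut)
  rw [hset, Finset.card_insert_of_notMem]
  simp only [Finset.mem_filter, Finset.mem_univ, true_and, not_and]
  intro _
  rw [hwp, hwq]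
  exact not_lt_of_gt hAltB

lemma cover_reaches {n v : ℕ} (hv : v + 1 < n) (w : Equiv.Perm (Fin n))
    (hpq : w.symm ⟨v, by omega⟩ < w.symm ⟨v+1, hv⟩) :
    Reaches ⇑((Equiv.swap (⟨v, by omega⟩ : Fin n) ⟨v+1, hv⟩) * w) ⇑w := by
  set A : Fin n := ⟨v, by omega⟩ with hA
  set B : Fin n := ⟨v+1, hv⟩ with hB
  set p : Fin n := w.symm A with hp
  set q : Fin n := w.symm B with hq
  set x : Equiv.Perm (Fin n) := Equiv.swap A B * w with hx
  have hwp : w p = A := w.apply_symm_apply A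
  have hwq : w q = B := w.apply_symm_apply B
  have hAleB : A ≤ B := by rw [Fin.le_def]; simp [hA, hB]
  have hxp : x p = B := by
    rw [hx]; simp only [Equiv.Perm.coe_mul, Function.comp_apply, hwp, Equiv.swap_apply_left]
  have hxq : x q = A := by
    rw [hx]; simp only [Equiv.Perm.coe_mul, Function.comp_apply, hwq, Equiv.swap_apply_right]
  have hxother : ∀ j, j ≠ p → j ≠ q → x j = w j := by
    intro j hjp hjq
    rw [hx]; simp only [Equiv.Perm.coe_mul, Function.comp_apply]
    apply Equiv.swap_apply_of_ne_of_ne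
    · intro hcon; exact hjp (by rw [hp, ← hcon, Equiv.symm_apply_apply])
    · intro hcon; exact hjq (by rw [hq, ← hcon, Equiv.symm_apply_apply])
  set b : Fin n → Fin n := fun j => if j = p then B else w j with hb
  refine ⟨⇑x, b, ⟨⇑x, ?_⟩, ?_, ?_⟩
  · refine ⟨x.injective, fun i => ⟨le_refl _, ?_, ?_⟩⟩
    · by_cases hip : i = p
      · subst hip; rw [hxp]; simp [hb]
      · have hbi : b i = w i := by rw [hb]; simp [hip]
        rw [hbi]
        by_cases hiq : i = q
        · subst hiq; rw [hxq, hwq]; exact hAleB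
        · rw [hxother i hip hiq]
    · intro s hs1 hs2
      exact absurd (lt_of_le_of_lt hs1 hs2) (lt_irrefl _)
  · exact ⟨x.injective, fun i => ⟨le_refl _,
      fun s hs1 hs2 => absurd (lt_of_le_of_lt hs1 hs2) (lt_irrefl _)⟩⟩
  · refine ⟨pconj_injective w.injective, fun i => ⟨?_, ?_⟩⟩
    · show (b i.rev).rev ≤ (w i.rev).rev
      apply Fin.rev_le_rev.mpr
      by_cases hip : i.rev = p
      · have : b i.rev = B := by rw [hb]; simp [hip]
        rw [this, hip, hwp]; exact hAleB
      · have : b i.rev = w i.rev := by rw [hb]; simp [hip]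
        rw [this]
    · intro s hs1 hs2
      by_cases hip : i.rev = p
      · have pb : pconj b i = B.rev := by
          show (b i.rev).rev = B.rev
          rw [hb]; simp [hip]
        have pw : pconj ⇑w i = A.rev := by
          show (w i.rev).rev = A.rev
          rw [hip, hwp]
        rw [pb] at hs1; rw [pw] at hs2
        have hs : s = B.rev := by
          apply Fin.ext
          rw [Fin.le_def] at hs1
          rw [Fin.lt_def] at hs2
          rw [Fin.val_rev] at hs1 hs2 ⊢
          rw [hA] at hs2
          rw [hB] at hs1 ⊢
          simp only [Fin.val_mk] at hs1 hs2 ⊢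
          omega
        refine ⟨q.rev, ?_, ?_⟩
        · have hi : i = p.rev := by rw [← hip, Fin.rev_rev]
          rw [hi]
          exact Fin.rev_lt_rev.mpr hpq
        · show (w q.rev.rev).rev = s
          rw [Fin.rev_rev, hwq, hs]
      · have heq : pconj b i = pconj ⇑w i := by
          show (b i.rev).rev = (w i.rev).rev
          rw [hb]; simp [hip]
        rw [heq] at hs1
        exact absurd (lt_of_le_of_lt hs1 hs2) (lt_irrefl _)

lemma sgen_eq {n i : ℕ} (h1 : 1 ≤ i) (h2 : i ≤ n - 1) :
    ∃ hv : (i - 1) + 1 < n,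
      sgen n i = Equiv.swap (⟨i - 1, by omega⟩ : Fin n) ⟨(i - 1) + 1, hv⟩ := by
  have hn : 2 ≤ n := by omega
  have hv : (i - 1) + 1 < n := by omega
  refine ⟨hv, ?_⟩
  rw [sgen, dif_pos ⟨h1, by omega⟩]
  congr 1
  exact Fin.ext (by simp only [Fin.val_mk]; omega)

lemma sgen_step {n i : ℕ} (h1 : 1 ≤ i) (h2 : i ≤ n - 1) (w : Equiv.Perm (Fin n)) :
    (invCount ⇑(sgen n i * w) = invCount ⇑w + 1 ∧ Reaches ⇑(sgen n i * w) ⇑w) ∨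
      invCount ⇑w = invCount ⇑(sgen n i * w) + 1 := by
  obtain ⟨hv, hs⟩ := sgen_eq h1 h2
  set v := i - 1 with hvdef
  set A : Fin n := ⟨v, by omega⟩ with hA
  set B : Fin n := ⟨v + 1, hv⟩ with hB
  have hABne : A ≠ B := by simp [hA, hB, Fin.ext_iff]
  rcases lt_trichotomy (w.symm A) (w.symm B) with h | h | h
  · left
    rw [hs]
    exact ⟨invCount_swap_succ hv w h, cover_reaches hv w h⟩
  · exact absurd (w.symm.injective h) hABne
  · right
    have hsymm : (Equiv.swap A B * w).symm = w.symm * Equiv.swap A B := by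
      rw [← Equiv.Perm.inv_def, mul_inv_rev, Equiv.swap_inv, Equiv.Perm.inv_def]
    have hcond : (Equiv.swap A B * w).symm A < (Equiv.swap A B * w).symm B := by
      rw [hsymm]
      simp only [Equiv.Perm.coe_mul, Function.comp_apply, Equiv.swap_apply_left,
        Equiv.swap_apply_right]
      exact h
    have key := invCount_swap_succ hv (Equiv.swap A B * w) hcond
    have hww : Equiv.swap A B * (Equiv.swap A B * w) = w := by
      rw [← mul_assoc, Equiv.swap_mul_self, one_mul]
    rw [hww] at key
    rw [hs]
    exact key

lemma invCount_prod_le {n : ℕ} (l : List ℕ) (y : Equiv.Perm (Fin n))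
    (hval : ∀ i ∈ l, 1 ≤ i ∧ i ≤ n - 1) :
    invCount ⇑((l.map (sgen n)).prod * y) ≤ invCount ⇑y + l.length := by
  induction l with
  | nil => simp
  | cons i l ih =>
    have hvi := hval i (List.mem_cons_self)
    have ihl := ih (fun j hj => hval j (List.mem_cons_of_mem _ hj))
    rw [List.map_cons, List.prod_cons, mul_assoc]
    rcases sgen_step hvi.1 hvi.2 ((l.map (sgen n)).prod * y) with ⟨heq, _⟩ | heq <;>
      · rw [List.length_cons]; omega

lemma weak_aux {n : ℕ} : ∀ (l : List ℕ) (x y : Equiv.Perm (Fin n)),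
    (∀ i ∈ l, 1 ≤ i ∧ i ≤ n - 1) → x = (l.map (sgen n)).prod * y →
    invCount ⇑x = invCount ⇑y + l.length → PseudoGE x y := by
  intro l
  induction l with
  | nil =>
    intro x y _ hx _
    rw [List.map_nil, List.prod_nil, one_mul] at hx
    subst hx
    exact Relation.ReflTransGen.refl
  | cons i l ih =>
    intro x y hval hx hinv
    rw [List.map_cons, List.prod_cons, mul_assoc] at hx
    set z := (l.map (sgen n)).prod * y with hz
    have hvi := hval i (List.mem_cons_self)
    have hbound := invCount_prod_le l y (fun j hj => hval j (List.mem_cons_of_mem _ hj))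
    rw [← hz] at hbound
    rcases sgen_step hvi.1 hvi.2 z with ⟨heq, hr⟩ | heq
    · rw [← hx] at heq hr
      have hz_inv : invCount ⇑z = invCount ⇑y + l.length := by
        rw [List.length_cons] at hinv
        omega
      exact Relation.ReflTransGen.head hr
        (ih z y (fun j hj => hval j (List.mem_cons_of_mem _ hj)) hz hz_inv)
    · rw [← hx] at heq
      rw [List.length_cons] at hinv
      omega

theorem weak_pseudo {n : ℕ} (x y : Equiv.Perm (Fin n)) (h : WeakGE x y) : PseudoGE x y := by
  obtain ⟨l, hval, hx, hinv⟩ := h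
  exact weak_aux l x y hval hx hinv

/-- Pseudoreachability lies between the left weak order and the
Bruhat order: `x ≥_W y → x ≥_P y` and `x ≥_P y → x ≥_B y`. -/
theorem stmt8 {n : ℕ} (x y : Equiv.Perm (Fin n)) :
    (WeakGE x y → PseudoGE x y) ∧ (PseudoGE x y → BruhatGE x y) := by
  constructor
  · rintro ⟨l, hval, hx, hinv⟩
    exact weak_aux l x y hval hx hinv
  · intro h
    induction h with
    | refl => exact fun i j => le_refl _
    | tail hab hbc ih => exact fun i j => le_trans (reaches_bruhat _ _ hbc i j) (ih i j)
end

section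
/- Let x, y be permutations of [n] with x(n) = y(n). Then x ⊵_R y if and only if x̂ ⊵_R ŷ, where x̂, ŷ are the projected permutations in S_{n−1}. -/
/-- Auxiliary characterization of reachability. -/
def Rchar {m : ℕ} (x y : Fin m → Fin m) : Prop :=
  ∀ i t, y i < t → t ≤ x i → ∃ j, i < j ∧ y j = t

lemma reaches_iff_rchar {m : ℕ} {x y : Fin m → Fin m} (hx : Function.Injective x)
    (hy : Function.Injective y) : Reaches x y ↔ Rchar x y := by
  constructor
  · rintro ⟨a, b, ⟨o, ho_inj, ho⟩, ⟨-, hxA⟩, -, hycA⟩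
    have hob : ∀ k : ℕ, ∀ i : Fin m, i.val = k → o i = x i := by
      intro k
      induction k using Nat.strong_induction_on with
      | _ k IH =>
        intro i hik
        have h1 := ho i
        have h2 := hxA i
        have hxo : x i ≤ o i := by
          by_contra hlt
          push_neg at hlt
          obtain ⟨j, hj, hje⟩ := h2.2 (o i) h1.1 hlt
          rw [← IH j.val (hik ▸ hj) j rfl] at hje
          exact absurd (ho_inj hje) (ne_of_lt hj)
        have hox : o i ≤ x i := by
          by_contra hlt
          push_neg at hlt
          obtain ⟨j, hj, hje⟩ := h1.2.2 (x i) h2.1 hlt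
          rw [IH j.val (hik ▸ hj) j rfl] at hje
          exact absurd (hx hje) (ne_of_lt hj)
        exact le_antisymm hox hxo
    intro i t hyt htx
    have htb : t ≤ b i := htx.trans (by rw [← hob i.val i rfl]; exact (ho i).2.1)
    obtain ⟨j, hj, hje⟩ := (hycA i.rev).2 t.rev
      (by simpa [pconj, Fin.rev_le_rev] using htb)
      (by simpa [pconj, Fin.rev_lt_rev] using hyt)
    refine ⟨j.rev, by simpa using Fin.rev_lt_rev.mpr hj, ?_⟩
    have h2 : (y j.rev).rev = t.rev := by simpa [pconj] using hje
    exact Fin.rev_injective h2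
  · intro hR
    refine ⟨x, fun i => max (x i) (y i), ⟨x, hx, fun i => ⟨le_refl _, le_max_left _ _,
      fun s hs hs' => absurd (lt_of_le_of_lt hs hs') (lt_irrefl _)⟩⟩,
      ⟨hx, fun i => ⟨le_refl _, fun s hs hs' => absurd (lt_of_le_of_lt hs hs') (lt_irrefl _)⟩⟩,
      ?_, ?_⟩
    · intro i j hij
      simp only [pconj] at hij
      exact Fin.rev_injective (hy (Fin.rev_injective hij))
    · intro i
      refine ⟨Fin.rev_le_rev.mpr (le_max_right _ _), ?_⟩
      intro s hbs hsy
      simp only [pconj] at hbs hsy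
      rw [← Fin.rev_rev s, Fin.rev_le_rev] at hbs
      rw [← Fin.rev_rev s, Fin.rev_lt_rev] at hsy
      have hsx : s.rev ≤ x i.rev := by
        rcases le_max_iff.mp hbs with h | h
        · exact h
        · exact absurd h (not_le.mpr hsy)
      obtain ⟨j, hj, hje⟩ := hR i.rev s.rev hsy hsx
      refine ⟨j.rev, by simpa using Fin.rev_lt_rev.mpr hj, ?_⟩
      simp [pconj, hje]

lemma hatf_val {n : ℕ} (x : Fin (n + 1) → Fin (n + 1)) (i : Fin n) :
    (hatf x i).val = if (x i.castSucc).val < (x (Fin.last n)).val then (x i.castSucc).val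
      else (x i.castSucc).val - 1 := by
  simp only [hatf]
  split_ifs <;> rfl

lemma castSucc_ne_last_val {n : ℕ} {x : Fin (n + 1) → Fin (n + 1)}
    (hx : Function.Injective x) (i : Fin n) :
    (x i.castSucc).val ≠ (x (Fin.last n)).val := by
  intro he
  have h2 := Fin.ext_iff.mp (hx (Fin.ext he))
  have := i.isLt
  simp [Fin.val_last] at h2
  omega

lemma hatf_injective {n : ℕ} {x : Fin (n + 1) → Fin (n + 1)} (hx : Function.Injective x) :
    Function.Injective (hatf x) := by
  intro i j hij
  have hi := castSucc_ne_last_val hx i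
  have hj := castSucc_ne_last_val hx j
  have h1 := (x i.castSucc).isLt
  have h2 := (x j.castSucc).isLt
  have hv := Fin.ext_iff.mp hij
  rw [hatf_val, hatf_val] at hv
  have : (x i.castSucc).val = (x j.castSucc).val := by split_ifs at hv <;> omega
  exact Fin.castSucc_injective n (hx (Fin.ext this))

lemma rchar_hat_iff {n : ℕ} {x y : Fin (n + 1) → Fin (n + 1)}
    (hx : Function.Injective x) (hy : Function.Injective y)
    (h : x (Fin.last n) = y (Fin.last n)) :
    Rchar x y ↔ Rchar (hatf x) (hatf y) := by
  set v := (y (Fin.last n)).val with hvdef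
  have hxv : (x (Fin.last n)).val = v := by rw [h]
  have hvlt : v < n + 1 := (y (Fin.last n)).isLt
  have hxne : ∀ i : Fin n, (x i.castSucc).val ≠ v :=
    fun i => hxv ▸ castSucc_ne_last_val hx i
  have hyne : ∀ i : Fin n, (y i.castSucc).val ≠ v := fun i => castSucc_ne_last_val hy i
  constructor
  · intro hR i t hyt htx
    have htlt := t.isLt
    have hT : (if t.val < v then t.val else t.val + 1) < n + 1 := by split <;> omega
    set T : Fin (n + 1) := ⟨if t.val < v then t.val else t.val + 1, hT⟩ with hTdef
    have hyiv := (y i.castSucc).isLt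
    have hxiv := (x i.castSucc).isLt
    have hyt' : y i.castSucc < T := by
      rw [Fin.lt_def]
      have hh := Fin.lt_def.mp hyt
      rw [hatf_val, ← hvdef] at hh
      have hne := hyne i
      simp only [hTdef]
      split_ifs at hh ⊢ <;> omega
    have htx' : T ≤ x i.castSucc := by
      rw [Fin.le_def]
      have hh := Fin.le_def.mp htx
      rw [hatf_val, hxv] at hh
      have hne := hxne i
      simp only [hTdef]
      split_ifs at hh ⊢ <;> omega
    obtain ⟨j, hj, hje⟩ := hR i.castSucc T hyt' htx'
    have hjne : j ≠ Fin.last n := by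
      intro he
      rw [he] at hje
      have h2 : v = T.val := Fin.ext_iff.mp hje
      simp only [hTdef] at h2
      split_ifs at h2 <;> omega
    obtain ⟨j', rfl⟩ := Fin.exists_castSucc_eq.mpr hjne
    refine ⟨j', Fin.castSucc_lt_castSucc_iff.mp hj, ?_⟩
    have hjv : (y j'.castSucc).val = T.val := Fin.ext_iff.mp hje
    have hjn := hyne j'
    apply Fin.ext
    rw [hatf_val, ← hvdef]
    simp only [hTdef] at hjv
    split_ifs at hjv ⊢ <;> omega
  · intro hR i t hyt htx
    have hine : i ≠ Fin.last n := by
      intro he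
      rw [he] at hyt htx
      rw [h] at htx
      exact absurd (lt_of_lt_of_le hyt htx) (lt_irrefl _)
    obtain ⟨i', rfl⟩ := Fin.exists_castSucc_eq.mpr hine
    by_cases htv : t = y (Fin.last n)
    · exact ⟨Fin.last n, Fin.castSucc_lt_last i', htv.symm⟩
    have htvv : t.val ≠ v := fun he => htv (Fin.ext he)
    have htlt := t.isLt
    have hT : (if t.val < v then t.val else t.val - 1) < n := by split <;> omega
    set T : Fin n := ⟨if t.val < v then t.val else t.val - 1, hT⟩ with hTdef
    have hyiv := (y i'.castSucc).isLt
    have hxiv := (x i'.castSucc).isLt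
    have h1 : hatf y i' < T := by
      rw [Fin.lt_def, hatf_val, ← hvdef]
      have hh := Fin.lt_def.mp hyt
      have hne := hyne i'
      simp only [hTdef]
      split_ifs <;> omega
    have h2 : T ≤ hatf x i' := by
      rw [Fin.le_def, hatf_val, hxv]
      have hh := Fin.le_def.mp htx
      have hne := hxne i'
      simp only [hTdef]
      split_ifs <;> omega
    obtain ⟨j', hj, hje⟩ := hR i' T h1 h2
    refine ⟨j'.castSucc, Fin.castSucc_lt_castSucc_iff.mpr hj, ?_⟩
    have hjv := Fin.ext_iff.mp hje
    rw [hatf_val, ← hvdef] at hjv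
    have hjn := hyne j'
    have hjlt := (y j'.castSucc).isLt
    apply Fin.ext
    simp only [hTdef] at hjv
    split_ifs at hjv <;> omega

/-- Lemma `lem:proj`. For `x, y ∈ S_n` (`n ≥ 2`) with `x(n) = y(n)`:
`x ⊵_R y` iff `x̂ ⊵_R ŷ`. -/
theorem stmt9 {n : ℕ} (hn : 1 ≤ n) (x y : Equiv.Perm (Fin (n + 1)))
    (h : x (Fin.last n) = y (Fin.last n)) :
    Reaches ⇑x ⇑y ↔ Reaches (hatf ⇑x) (hatf ⇑y) := by
  rw [reaches_iff_rchar x.injective y.injective,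
    reaches_iff_rchar (hatf_injective x.injective) (hatf_injective y.injective)]
  exact rchar_hat_iff x.injective y.injective h
end
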